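/- arXiv:1406.0058 — 5 statements merged into one kernel-verified Lean document; each statement's English description precedes it below -/
import Mathlib

section
/- If X is a fibrant presheaf over an Eilenberg-Zilber category and x₀, x₁ : a → X are degenerate sections that are ∂-equivalent, then x₀ = x₁. -/
open CategoryTheory CategoryTheory.Limits CategoryTheory.GrothendieckTopology Opposite

universe u

variable (A : Type u) [SmallCategory A]

/-- The category of presheaves of sets on `A`. -/
abbrev Psh := Aᵒᵖ ⥤ Type u

variable {A}

/-- A model category structure on the category of presheaves on `A` whose
cofibrations are exactly the monomorphisms.  We record the weak equivalences
and the fibrations, together with the usual model category axioms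
(two-out-of-three, stability under retracts, lifting and factorization),
as well as the (derivable) stability of fibrations, trivial fibrations and
weak equivalences under pullback along fibrations. -/
structure PshModel (A : Type u) [SmallCategory A] where
  W : MorphismProperty (Psh A)
  Fib : MorphismProperty (Psh A)
  weq_id : ∀ X : Psh A, W (𝟙 X)
  weq_comp : ∀ {X Y Z : Psh A} (f : X ⟶ Y) (g : Y ⟶ Z), W f → W g → W (f ≫ g)
  weq_cancel_left : ∀ {X Y Z : Psh A} (f : X ⟶ Y) (g : Y ⟶ Z), W f → W (f ≫ g) → W g
  weq_cancel_right : ∀ {X Y Z : Psh A} (f : X ⟶ Y) (g : Y ⟶ Z), W g → W (f ≫ g) → W f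
  weq_retract : ∀ {X Y X' Y' : Psh A} (f : X ⟶ Y) (f' : X' ⟶ Y')
    (i : X ⟶ X') (r : X' ⟶ X) (j : Y ⟶ Y') (s : Y' ⟶ Y),
    i ≫ r = 𝟙 X → j ≫ s = 𝟙 Y → i ≫ f' = f ≫ j → f' ≫ s = r ≫ f → W f' → W f
  fib_retract : ∀ {X Y X' Y' : Psh A} (f : X ⟶ Y) (f' : X' ⟶ Y')
    (i : X ⟶ X') (r : X' ⟶ X) (j : Y ⟶ Y') (s : Y' ⟶ Y),
    i ≫ r = 𝟙 X → j ≫ s = 𝟙 Y → i ≫ f' = f ≫ j → f' ≫ s = r ≫ f → W f' → Fib f' → Fib f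
  fib_comp : ∀ {X Y Z : Psh A} (f : X ⟶ Y) (g : Y ⟶ Z), Fib f → Fib g → Fib (f ≫ g)
  lift_trivCof_fib : ∀ {X Y S T : Psh A} (i : X ⟶ Y) (p : S ⟶ T),
    Mono i → W i → Fib p → HasLiftingProperty i p
  lift_cof_trivFib : ∀ {X Y S T : Psh A} (i : X ⟶ Y) (p : S ⟶ T),
    Mono i → Fib p → W p → HasLiftingProperty i p
  fact_cof_trivFib : ∀ {X Y : Psh A} (f : X ⟶ Y),
    ∃ (Z : Psh A) (i : X ⟶ Z) (p : Z ⟶ Y), Mono i ∧ Fib p ∧ W p ∧ i ≫ p = f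
  fact_trivCof_fib : ∀ {X Y : Psh A} (f : X ⟶ Y),
    ∃ (Z : Psh A) (i : X ⟶ Z) (p : Z ⟶ Y), Mono i ∧ W i ∧ Fib p ∧ i ≫ p = f
  fib_pullback : ∀ {X Y Y' : Psh A} (v : Y ⟶ Y') (p : X ⟶ Y'),
    Fib p → Fib (pullback.fst v p)
  trivFib_pullback : ∀ {X Y Y' : Psh A} (v : Y ⟶ Y') (p : X ⟶ Y'),
    Fib p → W p → W (pullback.fst v p)

namespace PshModel

variable (M : PshModel A)

/-- Trivial fibrations. -/
def TrivFib {X Y : Psh A} (p : X ⟶ Y) : Prop := M.Fib p ∧ M.W p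

/-- Trivial cofibrations. -/
def TrivCof {X Y : Psh A} (i : X ⟶ Y) : Prop := Mono i ∧ M.W i

/-- An object is fibrant if the map to the terminal object is a fibration. -/
def Fibrant (X : Psh A) : Prop := M.Fib (terminal.from X)

/-- Right properness: weak equivalences are stable under pullback along fibrations. -/
def RightProper : Prop := ∀ {X Y Y' : Psh A} (v : Y ⟶ Y') (p : X ⟶ Y'),
  M.Fib p → M.W v → M.W (pullback.snd v p)

/-- Left properness: weak equivalences are stable under pushout along cofibrations
(= monomorphisms). -/
def LeftProper : Prop := ∀ {Z X Y : Psh A} (f : Z ⟶ X) (g : Z ⟶ Y),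
  Mono f → M.W g → M.W (pushout.inr g f)

def Proper : Prop := M.LeftProper ∧ M.RightProper

/-- Strong properness: the model structure is proper and fibrations are local:
a map is a fibration as soon as all of its pullbacks to representables are. -/
def StronglyProper : Prop :=
  M.Proper ∧ ∀ {X Y : Psh A} (p : X ⟶ Y),
    (∀ (a : A) (s : yoneda.obj a ⟶ Y), M.Fib (pullback.fst s p)) → M.Fib p

end PshModel

/-- An interval object for a model structure on presheaves: an object `I` with
two endpoints `i0`, `i1`, whose pairing is a monomorphism, and such that all the
projections `I × X → X` are weak equivalences. -/
structure PshInterval (M : PshModel A) where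
  I : Psh A
  i0 : ⊤_ (Psh A) ⟶ I
  i1 : ⊤_ (Psh A) ⟶ I
  endpoints_mono : Mono (coprod.desc i0 i1)
  proj_weq : ∀ X : Psh A, M.W (prod.snd : I ⨯ X ⟶ X)

namespace PshInterval

variable {M : PshModel A} (Iv : PshInterval M)

/-- The evaluation of a homotopy `h : I × X → Y` at the endpoint `ε`. -/
noncomputable def ev {X Y : Psh A} (e : ⊤_ (Psh A) ⟶ Iv.I) (h : Iv.I ⨯ X ⟶ Y) : X ⟶ Y :=
  prod.lift (terminal.from X ≫ e) (𝟙 X) ≫ h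

/-- A homotopy `h : I × X → Y` is constant on a subobject `S` of `X` if its
restriction to `I × S` factors through the projection to `S`. -/
def ConstantOn {X Y : Psh A} (h : Iv.I ⨯ X ⟶ Y) (S : Subfunctor X) : Prop :=
  ∃ k : S.toFunctor ⟶ Y, prod.map (𝟙 Iv.I) S.ι ≫ h = prod.snd ≫ k

end PshInterval

/-- The boundary of a presheaf: the supremum of all its proper subobjects.
For a representable presheaf over an Eilenberg-Zilber category this is the maximal
proper subobject. -/
def pshBoundary (X : Psh A) : Subfunctor X where
  obj U := {x | ∃ G : Subfunctor X, G ≠ ⊤ ∧ x ∈ G.obj U}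
  map := by
    rintro U V i x ⟨G, hG, hx⟩
    exact ⟨G, hG, G.map i hx⟩

/-- The boundary of a section `x : a ⟶ X`: the restriction of `x` to the
boundary of the representable presheaf `a`. -/
def sectionBoundary {X : Psh A} {a : A} (x : yoneda.obj a ⟶ X) :
    (pshBoundary (yoneda.obj a)).toFunctor ⟶ X :=
  (pshBoundary (yoneda.obj a)).ι ≫ x

/-- Two sections `x y : a ⟶ X` are `∂`-equivalent if they have the same boundary
and there is a homotopy between them which is constant on the boundary `∂a`. -/
def BdEquiv (M : PshModel A) (Iv : PshInterval M) {X : Psh A} {a : A}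
    (x y : yoneda.obj a ⟶ X) : Prop :=
  sectionBoundary x = sectionBoundary y ∧
  ∃ h : Iv.I ⨯ yoneda.obj a ⟶ X, Iv.ConstantOn h (pshBoundary (yoneda.obj a)) ∧
    Iv.ev Iv.i0 h = x ∧ Iv.ev Iv.i1 h = y

/-- A minimal complex: a fibrant object in which any two `∂`-equivalent sections
are equal. -/
def MinimalComplex (M : PshModel A) (Iv : PshInterval M) (X : Psh A) : Prop :=
  M.Fibrant X ∧ ∀ (a : A) (x y : yoneda.obj a ⟶ X), BdEquiv M Iv x y → x = y

/-- `∂`-equivalence of sections of `X` over `Y` (i.e. in the slice over `Y`):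
the homotopy is required to be fibrewise, i.e. constant over `Y`. -/
def BdEquivOver (M : PshModel A) (Iv : PshInterval M) {X Y : Psh A} (p : X ⟶ Y)
    {a : A} (x y : yoneda.obj a ⟶ X) : Prop :=
  x ≫ p = y ≫ p ∧
  sectionBoundary x = sectionBoundary y ∧
  ∃ h : Iv.I ⨯ yoneda.obj a ⟶ X, Iv.ConstantOn h (pshBoundary (yoneda.obj a)) ∧
    h ≫ p = prod.snd ≫ x ≫ p ∧
    Iv.ev Iv.i0 h = x ∧ Iv.ev Iv.i1 h = y

/-- A minimal fibration: a fibration which is a minimal complex as an object of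
the slice over its codomain (with the induced model structure), i.e. any two
sections which are `∂`-equivalent over the base are equal. -/
def MinFib (M : PshModel A) (Iv : PshInterval M) {X Y : Psh A} (p : X ⟶ Y) : Prop :=
  M.Fib p ∧ ∀ (a : A) (x y : yoneda.obj a ⟶ X), BdEquivOver M Iv p x y → x = y

/-- A Reedy category structure on `A`. -/
structure ReedyStruct (A : Type u) [SmallCategory A] where
  deg : A → ℕ
  plus : ∀ {a b : A}, (a ⟶ b) → Prop
  minus : ∀ {a b : A}, (a ⟶ b) → Prop
  plus_id : ∀ a : A, plus (𝟙 a)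
  minus_id : ∀ a : A, minus (𝟙 a)
  plus_comp : ∀ {a b c : A} (f : a ⟶ b) (g : b ⟶ c), plus f → plus g → plus (f ≫ g)
  minus_comp : ∀ {a b c : A} (f : a ⟶ b) (g : b ⟶ c), minus f → minus g → minus (f ≫ g)
  plus_deg : ∀ {a b : A} (f : a ⟶ b), plus f → deg a ≤ deg b
  minus_deg : ∀ {a b : A} (f : a ⟶ b), minus f → deg b ≤ deg a
  plus_deg_eq : ∀ {a b : A} (f : a ⟶ b), plus f → deg a = deg b →
    ∃ h : a = b, f = eqToHom h
  minus_deg_eq : ∀ {a b : A} (f : a ⟶ b), minus f → deg a = deg b →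
    ∃ h : a = b, f = eqToHom h
  fact : ∀ {a b : A} (f : a ⟶ b), ∃ (c : A) (g : a ⟶ c) (h : c ⟶ b),
    minus g ∧ plus h ∧ g ≫ h = f
  fact_unique : ∀ {a b c c' : A} (g : a ⟶ c) (h : c ⟶ b) (g' : a ⟶ c') (h' : c' ⟶ b),
    minus g → plus h → minus g' → plus h' → g ≫ h = g' ≫ h' →
    ∃ e : c = c', g' = g ≫ eqToHom e ∧ h = eqToHom e ≫ h'

namespace ReedyStruct

variable (R : ReedyStruct A)

/-- A section `y` of a presheaf is degenerate if it is the restriction of a section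
along a non-identity map of `A₋`. -/
def Degenerate {X : Psh A} {b : A} (y : X.obj (op b)) : Prop :=
  ∃ (c : A) (g : b ⟶ c), R.minus g ∧ R.deg c < R.deg b ∧ ∃ z : X.obj (op c), X.map g.op z = y

def Nondegenerate {X : Psh A} {b : A} (y : X.obj (op b)) : Prop := ¬ R.Degenerate y

end ReedyStruct

/-- An elegant Reedy category (in the sense of Bergner--Rezk): a Reedy category
in which every section of every presheaf is, in a unique way, the restriction of
a non-degenerate section along a map of `A₋`. -/
structure ElegantReedy (A : Type u) [SmallCategory A] extends ReedyStruct A where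
  ez_exists : ∀ (X : Psh A) (a : A) (x : X.obj (op a)),
    ∃ (b : A) (f : a ⟶ b) (y : X.obj (op b)),
      minus f ∧ toReedyStruct.Nondegenerate y ∧ X.map f.op y = x
  ez_unique : ∀ (X : Psh A) (a : A) {b b' : A} (f : a ⟶ b) (f' : a ⟶ b')
    (y : X.obj (op b)) (y' : X.obj (op b')),
    minus f → minus f' → toReedyStruct.Nondegenerate y → toReedyStruct.Nondegenerate y' →
    X.map f.op y = X.map f'.op y' →
    ∃ e : b = b', f' = f ≫ eqToHom e ∧ y = X.map (eqToHom e).op y'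

/-- An Eilenberg-Zilber category: a Reedy category in which every map of `A₋`
has a section, and two maps of `A₋` with the same set of sections are equal. -/
structure EZCat (A : Type u) [SmallCategory A] extends ReedyStruct A where
  EZ1 : ∀ {a b : A} (f : a ⟶ b), minus f → ∃ s : b ⟶ a, s ≫ f = 𝟙 b
  EZ2 : ∀ {a b : A} (f g : a ⟶ b), minus f → minus g →
    (∀ s : b ⟶ a, s ≫ f = 𝟙 b ↔ s ≫ g = 𝟙 b) → f = g



section AuxStmt1

variable {A : Type u} [SmallCategory A]

/-- In a Reedy structure, a map from an object of strictly smaller degree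
cannot be a split epimorphism. -/
lemma auxNoSplit (R : ReedyStruct A) {a c : A} (s : c ⟶ a)
    (hdeg : R.deg c < R.deg a) (k : a ⟶ c) : k ≫ s ≠ 𝟙 a := by
  intro hk
  obtain ⟨d₁, km, kp, hkm, hkp, hkfact⟩ := R.fact k
  obtain ⟨d₂, sm, sp, hsm, hsp, hsfact⟩ := R.fact s
  obtain ⟨d₃, m, p, hm, hp, hmp⟩ := R.fact (kp ≫ sm)
  have hcomp : (km ≫ m) ≫ (p ≫ sp) = 𝟙 a ≫ 𝟙 a := by
    rw [Category.comp_id]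
    calc (km ≫ m) ≫ (p ≫ sp) = km ≫ (m ≫ p) ≫ sp := by simp [Category.assoc]
    _ = km ≫ (kp ≫ sm) ≫ sp := by rw [hmp]
    _ = (km ≫ kp) ≫ (sm ≫ sp) := by simp [Category.assoc]
    _ = k ≫ s := by rw [hkfact, hsfact]
    _ = 𝟙 a := hk
  obtain ⟨e, he1, he2⟩ := R.fact_unique (km ≫ m) (p ≫ sp) (𝟙 a) (𝟙 a)
    (R.minus_comp km m hkm hm) (R.plus_comp p sp hp hsp)
    (R.minus_id a) (R.plus_id a) hcomp
  have hde : R.deg d₃ = R.deg a := by rw [e]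
  have h1 : R.deg d₃ ≤ R.deg d₂ := R.plus_deg p hp
  have h2 : R.deg d₂ ≤ R.deg c := R.minus_deg sm hsm
  omega

/-- A map from an object of strictly smaller degree lies in the boundary of
the representable presheaf. -/
lemma auxMemBoundary (R : ReedyStruct A) {a c : A} (s : c ⟶ a)
    (hdeg : R.deg c < R.deg a) : s ∈ (pshBoundary (yoneda.obj a)).obj (op c) := by
  refine ⟨{ obj := fun U => {h | ∃ k : U.unop ⟶ c, h = k ≫ s}
            map := ?_ }, ?_, ⟨𝟙 c, (Category.id_comp s).symm⟩⟩
  · rintro U V i h ⟨k, hk⟩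
    exact ⟨i.unop ≫ k, by subst hk; simp [Category.assoc]⟩
  · intro hG
    have : 𝟙 a ∈ ({h | ∃ k : (op a).unop ⟶ c, h = k ≫ s} : Set ((op a).unop ⟶ a)) := by
      rw [show ({h | ∃ k : (op a).unop ⟶ c, h = k ≫ s} : Set ((op a).unop ⟶ a)) =
        (⊤ : Subfunctor (yoneda.obj a)).obj (op a) from
          congrFun (congrArg Subfunctor.obj hG) (op a)]
      trivial
    obtain ⟨k, hk⟩ := this
    exact auxNoSplit R s hdeg k hk.symm

/-- If a nondegenerate section is the restriction of another section along `q`,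
then `q` lies in the plus part. -/
lemma auxNondegPlus (R : ReedyStruct A) {X : Psh A} {b b' : A} (q : b ⟶ b')
    (y : X.obj (op b)) (y' : X.obj (op b')) (hy : R.Nondegenerate y)
    (h : X.map q.op y' = y) : R.plus q := by
  obtain ⟨d, m, p, hm, hp, hfact⟩ := R.fact q
  have hle : R.deg d ≤ R.deg b := R.minus_deg m hm
  rcases lt_or_eq_of_le hle with hlt | heq
  · exfalso
    refine hy ⟨d, m, hm, hlt, X.map p.op y', ?_⟩
    rw [← h, ← hfact]
    rw [show (m ≫ p).op = p.op ≫ m.op from rfl, X.map_comp]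
    rfl
  · obtain ⟨hbd, hme⟩ := R.minus_deg_eq m hm heq.symm
    subst hbd
    rw [eqToHom_refl] at hme
    rw [← hfact, hme, Category.id_comp]
    exact hp

/-- Every section is the restriction of a nondegenerate section along a map
of the minus part. -/
lemma auxEZExists (R : ReedyStruct A) (X : Psh A) :
    ∀ (n : ℕ) (c : A), R.deg c ≤ n → ∀ z : X.obj (op c),
    ∃ (b : A) (f : c ⟶ b) (y : X.obj (op b)),
      R.minus f ∧ R.deg b ≤ R.deg c ∧ R.Nondegenerate y ∧ X.map f.op y = z := by
  intro n
  induction n with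
  | zero =>
    intro c hc z
    by_cases hz : R.Degenerate z
    · obtain ⟨c', g, hg, hlt, _⟩ := hz; omega
    · exact ⟨c, 𝟙 c, z, R.minus_id c, le_refl _, hz, by simp⟩
  | succ n ih =>
    intro c hc z
    by_cases hz : R.Degenerate z
    · obtain ⟨c', g, hg, hlt, w, hw⟩ := hz
      obtain ⟨b, f, y, hf, hb, hy, hxy⟩ := ih c' (by omega) w
      refine ⟨b, g ≫ f, y, R.minus_comp g f hg hf, by omega, hy, ?_⟩
      rw [show (g ≫ f).op = f.op ≫ g.op from rfl, X.map_comp]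
      show X.map g.op (X.map f.op y) = z
      rw [hxy, hw]
    · exact ⟨c, 𝟙 c, z, R.minus_id c, le_refl _, hz, by simp⟩

end AuxStmt1

/-- Lemma: two degenerate sections of a fibrant object which are `∂`-equivalent are equal. -/
theorem stmt1 (E : EZCat A) (M : PshModel A) (Iv : PshInterval M)
    {X : Psh A} (hX : M.Fibrant X) {a : A} (x₀ x₁ : yoneda.obj a ⟶ X)
    (hd₀ : E.toReedyStruct.Degenerate (yonedaEquiv x₀))
    (hd₁ : E.toReedyStruct.Degenerate (yonedaEquiv x₁))
    (h : BdEquiv M Iv x₀ x₁) : x₀ = x₁ := by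
  set R := E.toReedyStruct with hR
  -- restrictions along boundary maps agree
  have hbd : ∀ {c : A} (s : c ⟶ a), s ∈ (pshBoundary (yoneda.obj a)).obj (op c) →
      X.map s.op (yonedaEquiv x₀) = X.map s.op (yonedaEquiv x₁) := by
    intro c s hs
    have := congrArg (fun (f : (pshBoundary (yoneda.obj a)).toFunctor.obj (op c) ⟶ X.obj (op c)) => f ⟨s, hs⟩) (congr_app h.1 (op c))
    have e0 : X.map s.op (yonedaEquiv x₀) = x₀.app (op c) s := by
      rw [CategoryTheory.yonedaEquiv_naturality, CategoryTheory.yonedaEquiv_apply]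
      show x₀.app (op c) (𝟙 c ≫ s) = _
      rw [Category.id_comp]
    have e1 : X.map s.op (yonedaEquiv x₁) = x₁.app (op c) s := by
      rw [CategoryTheory.yonedaEquiv_naturality, CategoryTheory.yonedaEquiv_apply]
      show x₁.app (op c) (𝟙 c ≫ s) = _
      rw [Category.id_comp]
    rw [e0, e1]
    exact this
  -- EZ decompositions
  obtain ⟨c₀, g₀, hg₀, hlt₀, z₀, hz₀⟩ := hd₀
  obtain ⟨c₁, g₁, hg₁, hlt₁, z₁, hz₁⟩ := hd₁
  obtain ⟨b₀, f₀', y₀, hf₀', hb₀, hy₀, hxy₀⟩ :=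
    auxEZExists R X (R.deg c₀) c₀ le_rfl z₀
  obtain ⟨b₁, f₁', y₁, hf₁', hb₁, hy₁, hxy₁⟩ :=
    auxEZExists R X (R.deg c₁) c₁ le_rfl z₁
  set f₀ : a ⟶ b₀ := g₀ ≫ f₀' with hf₀def
  set f₁ : a ⟶ b₁ := g₁ ≫ f₁' with hf₁def
  have hf₀ : R.minus f₀ := R.minus_comp g₀ f₀' hg₀ hf₀'
  have hf₁ : R.minus f₁ := R.minus_comp g₁ f₁' hg₁ hf₁'
  have hdb₀ : R.deg b₀ < R.deg a := lt_of_le_of_lt hb₀ hlt₀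
  have hdb₁ : R.deg b₁ < R.deg a := lt_of_le_of_lt hb₁ hlt₁
  have hx₀ : X.map f₀.op y₀ = yonedaEquiv x₀ := by
    rw [hf₀def, show (g₀ ≫ f₀').op = f₀'.op ≫ g₀.op from rfl, X.map_comp]
    show X.map g₀.op (X.map f₀'.op y₀) = _
    rw [hxy₀, hz₀]
  have hx₁ : X.map f₁.op y₁ = yonedaEquiv x₁ := by
    rw [hf₁def, show (g₁ ≫ f₁').op = f₁'.op ≫ g₁.op from rfl, X.map_comp]
    show X.map g₁.op (X.map f₁'.op y₁) = _
    rw [hxy₁, hz₁]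
  -- for any section s of f₀, y₀ is the restriction of x̂₁ along s ≫ f₁
  have key₀ : ∀ s : b₀ ⟶ a, s ≫ f₀ = 𝟙 b₀ → X.map (s ≫ f₁).op y₁ = y₀ := by
    intro s hs
    have h1 : X.map s.op (yonedaEquiv x₀) = y₀ := by
      rw [← hx₀, ← FunctorToTypes.map_comp_apply, ← op_comp, hs, op_id,
        FunctorToTypes.map_id_apply]
    have h2 : X.map s.op (yonedaEquiv x₁) = X.map (s ≫ f₁).op y₁ := by
      rw [← hx₁, ← FunctorToTypes.map_comp_apply, ← op_comp]
    rw [← h2, ← hbd s (auxMemBoundary R s hdb₀), h1]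
  have key₁ : ∀ s : b₁ ⟶ a, s ≫ f₁ = 𝟙 b₁ → X.map (s ≫ f₀).op y₀ = y₁ := by
    intro s hs
    have h1 : X.map s.op (yonedaEquiv x₁) = y₁ := by
      rw [← hx₁, ← FunctorToTypes.map_comp_apply, ← op_comp, hs, op_id,
        FunctorToTypes.map_id_apply]
    have h2 : X.map s.op (yonedaEquiv x₀) = X.map (s ≫ f₀).op y₀ := by
      rw [← hx₀, ← FunctorToTypes.map_comp_apply, ← op_comp]
    rw [← h2, hbd s (auxMemBoundary R s hdb₁), h1]
  have plus₀ : ∀ s : b₀ ⟶ a, s ≫ f₀ = 𝟙 b₀ → R.plus (s ≫ f₁) := fun s hs =>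
    auxNondegPlus R (s ≫ f₁) y₀ y₁ hy₀ (key₀ s hs)
  have plus₁ : ∀ s : b₁ ⟶ a, s ≫ f₁ = 𝟙 b₁ → R.plus (s ≫ f₀) := fun s hs =>
    auxNondegPlus R (s ≫ f₀) y₁ y₀ hy₁ (key₁ s hs)
  obtain ⟨s₀, hs₀⟩ := E.EZ1 f₀ hf₀
  obtain ⟨s₁, hs₁⟩ := E.EZ1 f₁ hf₁
  have hdeq : R.deg b₀ = R.deg b₁ :=
    le_antisymm (R.plus_deg _ (plus₀ s₀ hs₀)) (R.plus_deg _ (plus₁ s₁ hs₁))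
  obtain ⟨e, -⟩ := R.plus_deg_eq _ (plus₀ s₀ hs₀) hdeq
  subst e
  -- now b₁ = b₀
  have sec₀ : ∀ s : b₀ ⟶ a, s ≫ f₀ = 𝟙 b₀ → s ≫ f₁ = 𝟙 b₀ := by
    intro s hs
    obtain ⟨e', he'⟩ := R.plus_deg_eq _ (plus₀ s hs) hdeq
    rw [he']
    simp
  have sec₁ : ∀ s : b₀ ⟶ a, s ≫ f₁ = 𝟙 b₀ → s ≫ f₀ = 𝟙 b₀ := by
    intro s hs
    obtain ⟨e', he'⟩ := R.plus_deg_eq _ (plus₁ s hs) hdeq.symm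
    rw [he']
    simp
  have hff : f₀ = f₁ := E.EZ2 f₀ f₁ hf₀ hf₁ (fun s => ⟨sec₀ s, sec₁ s⟩)
  have hyy : y₁ = y₀ := by
    have := key₀ s₀ hs₀
    rw [← hff, hs₀, op_id, FunctorToTypes.map_id_apply] at this
    exact this
  apply yonedaEquiv.injective
  rw [← hx₀, ← hx₁, hff, hyy]
end

section
/- If X is a minimal complex in presheaves over an Eilenberg-Zilber category and f : X → X is I-homotopic to the identity, then f is an isomorphism. -/
open CategoryTheory CategoryTheory.Limits CategoryTheory.GrothendieckTopology Opposite

universe u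

variable (A : Type u) [SmallCategory A]

variable {A}

namespace Stmt4Aux

/-- canonical element of the terminal presheaf -/
noncomputable def tmElt (U : Aᵒᵖ) : (⊤_ (Psh A)).obj U :=
  yonedaEquiv (terminal.from (yoneda.obj U.unop))

lemma tm_ext {U : Aᵒᵖ} (x y : (⊤_ (Psh A)).obj U) : x = y := by
  have : (yonedaEquiv.symm x : yoneda.obj U.unop ⟶ _) = yonedaEquiv.symm y :=
    Subsingleton.elim _ _
  simpa using congrArg yonedaEquiv this

section Prod

variable {P Q R : Psh A}

lemma prod_app_ext {U : Aᵒᵖ} {x y : (P ⨯ Q).obj U}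
    (h1 : (prod.fst : P ⨯ Q ⟶ P).app U x = (prod.fst : P ⨯ Q ⟶ P).app U y)
    (h2 : (prod.snd : P ⨯ Q ⟶ Q).app U x = (prod.snd : P ⨯ Q ⟶ Q).app U y) : x = y := by
  have e1 : (yonedaEquiv.symm x : yoneda.obj U.unop ⟶ P ⨯ Q) ≫ prod.fst
      = yonedaEquiv.symm y ≫ prod.fst := by
    apply yonedaEquiv.injective
    rw [CategoryTheory.yonedaEquiv_comp, CategoryTheory.yonedaEquiv_comp,
      Equiv.apply_symm_apply, Equiv.apply_symm_apply]
    exact h1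
  have e2 : (yonedaEquiv.symm x : yoneda.obj U.unop ⟶ P ⨯ Q) ≫ prod.snd
      = yonedaEquiv.symm y ≫ prod.snd := by
    apply yonedaEquiv.injective
    rw [CategoryTheory.yonedaEquiv_comp, CategoryTheory.yonedaEquiv_comp,
      Equiv.apply_symm_apply, Equiv.apply_symm_apply]
    exact h2
  have := prod.hom_ext e1 e2
  simpa using congrArg yonedaEquiv this

/-- pairing of elements for a binary product of presheaves -/
noncomputable def ppair {U : Aᵒᵖ} (t : P.obj U) (v : Q.obj U) : (P ⨯ Q).obj U :=
  yonedaEquiv (prod.lift (yonedaEquiv.symm t) (yonedaEquiv.symm v))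

@[simp] lemma ppair_fst {U : Aᵒᵖ} (t : P.obj U) (v : Q.obj U) :
    (prod.fst : P ⨯ Q ⟶ P).app U (ppair t v) = t := by
  have h := CategoryTheory.yonedaEquiv_comp
    (prod.lift (CategoryTheory.yonedaEquiv.symm t) (CategoryTheory.yonedaEquiv.symm v))
    (prod.fst : P ⨯ Q ⟶ P)
  rw [prod.lift_fst, Equiv.apply_symm_apply] at h
  exact h.symm

@[simp] lemma ppair_snd {U : Aᵒᵖ} (t : P.obj U) (v : Q.obj U) :
    (prod.snd : P ⨯ Q ⟶ Q).app U (ppair t v) = v := by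
  have h := CategoryTheory.yonedaEquiv_comp
    (prod.lift (CategoryTheory.yonedaEquiv.symm t) (CategoryTheory.yonedaEquiv.symm v))
    (prod.snd : P ⨯ Q ⟶ Q)
  rw [prod.lift_snd, Equiv.apply_symm_apply] at h
  exact h.symm

lemma ppair_eta {U : Aᵒᵖ} (x : (P ⨯ Q).obj U) :
    ppair ((prod.fst : P ⨯ Q ⟶ P).app U x) ((prod.snd : P ⨯ Q ⟶ Q).app U x) = x :=
  prod_app_ext (by simp) (by simp)

lemma map_ppair {U V : Aᵒᵖ} (i : U ⟶ V) (t : P.obj U) (v : Q.obj U) :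
    (P ⨯ Q).map i (ppair t v) = ppair (P.map i t) (Q.map i v) := by
  apply prod_app_ext
  · rw [FunctorToTypes.naturality]; simp
  · rw [FunctorToTypes.naturality]; simp

lemma lift_app (f : R ⟶ P) (g : R ⟶ Q) {U : Aᵒᵖ} (y : R.obj U) :
    (prod.lift f g).app U y = ppair (f.app U y) (g.app U y) := by
  apply prod_app_ext
  · rw [← types_comp_apply ((prod.lift f g).app U) ((prod.fst : P ⨯ Q ⟶ P).app U),
      ← NatTrans.comp_app, prod.lift_fst]; simp
  · rw [← types_comp_apply ((prod.lift f g).app U) ((prod.snd : P ⨯ Q ⟶ Q).app U),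
      ← NatTrans.comp_app, prod.lift_snd]; simp

lemma prodmap_app {P' Q' : Psh A} (f : P ⟶ P') (g : Q ⟶ Q') {U : Aᵒᵖ} (x : (P ⨯ Q).obj U) :
    (prod.map f g).app U x
      = ppair (f.app U ((prod.fst : P ⨯ Q ⟶ P).app U x))
          (g.app U ((prod.snd : P ⨯ Q ⟶ Q).app U x)) := by
  apply prod_app_ext
  · rw [← types_comp_apply ((prod.map f g).app U) ((prod.fst : P' ⨯ Q' ⟶ P').app U),
      ← NatTrans.comp_app, prod.map_fst]; simp
  · rw [← types_comp_apply ((prod.map f g).app U) ((prod.snd : P' ⨯ Q' ⟶ Q').app U),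
      ← NatTrans.comp_app, prod.map_snd]; simp

end Prod


section Subpre

variable {F F' W : Psh A}

/-- union of two subpresheaves -/
def sup2 (S T : Subfunctor F) : Subfunctor F where
  obj U := S.obj U ∪ T.obj U
  map := by
    rintro U V i x (h | h)
    · exact Or.inl (S.map i h)
    · exact Or.inr (T.map i h)

lemma le_sup2_left (S T : Subfunctor F) : S ≤ sup2 S T := fun _ _ h => Or.inl h
lemma le_sup2_right (S T : Subfunctor F) : T ≤ sup2 S T := fun _ _ h => Or.inr h

/-- preimage of a subpresheaf -/
def pre (f : F' ⟶ F) (S : Subfunctor F) : Subfunctor F' where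
  obj U := f.app U ⁻¹' S.obj U
  map := by
    intro U V i x hx
    have : f.app V (F'.map i x) = F.map i (f.app U x) := NatTrans.naturality_apply f i x
    simp only [Set.mem_preimage, this]
    exact S.map i hx

/-- range of a morphism, as a subpresheaf -/
def rng (f : F' ⟶ F) : Subfunctor F where
  obj U := Set.range (f.app U)
  map := by
    rintro U V i x ⟨w, rfl⟩
    exact ⟨F'.map i w, NatTrans.naturality_apply f i w⟩

open Classical in
/-- gluing maps along a union of subpresheaves -/
noncomputable def glue (S T : Subfunctor F) (f : S.toFunctor ⟶ W) (g : T.toFunctor ⟶ W)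
    (hfg : ∀ (U : Aᵒᵖ) (x : F.obj U) (hS : x ∈ S.obj U) (hT : x ∈ T.obj U),
      f.app U ⟨x, hS⟩ = g.app U ⟨x, hT⟩) :
    (sup2 S T).toFunctor ⟶ W where
  app U := TypeCat.ofHom fun x =>
    if h : x.1 ∈ S.obj U then f.app U ⟨x.1, h⟩ else g.app U ⟨x.1, x.2.resolve_left h⟩
  naturality := by
    intro U V i
    ext x
    show (if h : F.map i x.1 ∈ S.obj V then f.app V ⟨F.map i x.1, h⟩
        else g.app V ⟨F.map i x.1, (((sup2 S T).map i x.2).resolve_left h)⟩)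
      = W.map i (if h : x.1 ∈ S.obj U then f.app U ⟨x.1, h⟩ else g.app U ⟨x.1, x.2.resolve_left h⟩)
    by_cases h : x.1 ∈ S.obj U
    · have h' : F.map i x.1 ∈ S.obj V := S.map i h
      rw [dif_pos h, dif_pos h']
      exact (ConcreteCategory.congr_hom (f.naturality i) ⟨x.1, h⟩ : _)
    · by_cases h' : F.map i x.1 ∈ S.obj V
      · have hT : x.1 ∈ T.obj U := x.2.resolve_left h
        have hT' : F.map i x.1 ∈ T.obj V := T.map i hT
        rw [dif_neg h, dif_pos h', hfg V _ h' hT']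
        exact (ConcreteCategory.congr_hom (g.naturality i) ⟨x.1, hT⟩ : _)
      · rw [dif_neg h, dif_neg h']
        exact (ConcreteCategory.congr_hom (g.naturality i) ⟨x.1, x.2.resolve_left h⟩ : _)

@[simp] lemma glue_app_left (S T : Subfunctor F) (f : S.toFunctor ⟶ W) (g : T.toFunctor ⟶ W)
    (hfg) {U : Aᵒᵖ} (x : F.obj U)
    (hS : x ∈ S.obj U) (hU : x ∈ (sup2 S T).obj U) :
    (glue S T f g hfg).app U ⟨x, hU⟩ = f.app U ⟨x, hS⟩ := dif_pos hS

lemma glue_app_right (S T : Subfunctor F) (f : S.toFunctor ⟶ W) (g : T.toFunctor ⟶ W)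
    (hfg) {U : Aᵒᵖ} (x : F.obj U)
    (hT : x ∈ T.obj U) (hU : x ∈ (sup2 S T).obj U) :
    (glue S T f g hfg).app U ⟨x, hU⟩ = g.app U ⟨x, hT⟩ := by
  by_cases h : x ∈ S.obj U
  · rw [glue_app_left S T f g hfg x h hU]; exact hfg U x h hT
  · exact dif_neg h

lemma glue_left (S T : Subfunctor F) (f : S.toFunctor ⟶ W) (g : T.toFunctor ⟶ W) (hfg) :
    Subfunctor.homOfLe (le_sup2_left S T) ≫ glue S T f g hfg = f := by
  ext U x
  exact glue_app_left S T f g hfg x.1 x.2 _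

lemma glue_right (S T : Subfunctor F) (f : S.toFunctor ⟶ W) (g : T.toFunctor ⟶ W) (hfg) :
    Subfunctor.homOfLe (le_sup2_right S T) ≫ glue S T f g hfg = g := by
  ext U x
  exact glue_app_right S T f g hfg x.1 x.2 _

lemma sup2_hom_ext (S T : Subfunctor F) (φ ψ : (sup2 S T).toFunctor ⟶ W)
    (h1 : Subfunctor.homOfLe (le_sup2_left S T) ≫ φ = Subfunctor.homOfLe (le_sup2_left S T) ≫ ψ)
    (h2 : Subfunctor.homOfLe (le_sup2_right S T) ≫ φ
      = Subfunctor.homOfLe (le_sup2_right S T) ≫ ψ) : φ = ψ := by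
  ext U x
  rcases x.2 with hS | hT
  · have := ConcreteCategory.congr_hom (congr_app h1 U) ⟨x.1, hS⟩
    exact this
  · have := ConcreteCategory.congr_hom (congr_app h2 U) ⟨x.1, hT⟩
    exact this

end Subpre

section Ev

variable {M : PshModel A} (Iv : PshInterval M)

lemma ev_eq (e : ⊤_ (Psh A) ⟶ Iv.I) {Z X : Psh A} (h : Iv.I ⨯ Z ⟶ X) :
    Iv.ev e h = prod.lift (terminal.from Z ≫ e) (𝟙 Z) ≫ h := rfl

lemma ev_natural (e : ⊤_ (Psh A) ⟶ Iv.I) {W' Z X : Psh A} (u : W' ⟶ Z) (h : Iv.I ⨯ Z ⟶ X) :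
    Iv.ev e (prod.map (𝟙 Iv.I) u ≫ h) = u ≫ Iv.ev e h := by
  rw [ev_eq, ev_eq, ← Category.assoc, prod.lift_map, ← Category.assoc, prod.comp_lift]
  have : u ≫ terminal.from Z = terminal.from W' := Subsingleton.elim _ _
  simp [← Category.assoc, this]

lemma ev_comp (e : ⊤_ (Psh A) ⟶ Iv.I) {Z X X' : Psh A} (h : Iv.I ⨯ Z ⟶ X) (f : X ⟶ X') :
    Iv.ev e (h ≫ f) = Iv.ev e h ≫ f := by
  rw [ev_eq, ev_eq, Category.assoc]

lemma ev_snd (e : ⊤_ (Psh A) ⟶ Iv.I) {Z X : Psh A} (k : Z ⟶ X) :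
    Iv.ev e ((prod.snd : Iv.I ⨯ Z ⟶ Z) ≫ k) = k := by
  rw [ev_eq, ← Category.assoc, prod.lift_snd, Category.id_comp]

lemma ev_map_snd (e : ⊤_ (Psh A) ⟶ Iv.I) {S X : Psh A} (L : Iv.I ⨯ S ⟶ X) :
    Iv.ev e (prod.map (𝟙 Iv.I) (prod.snd : Iv.I ⨯ S ⟶ S) ≫ L)
      = (prod.snd : Iv.I ⨯ S ⟶ S) ≫ Iv.ev e L := by
  rw [ev_eq, ev_eq, ← Category.assoc, prod.lift_map, ← Category.assoc, prod.comp_lift]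
  have : (prod.snd : Iv.I ⨯ S ⟶ S) ≫ terminal.from S = terminal.from _ := Subsingleton.elim _ _
  simp [← Category.assoc, this]

lemma ev_app (e : ⊤_ (Psh A) ⟶ Iv.I) {Z X : Psh A} (h : Iv.I ⨯ Z ⟶ X) (U : Aᵒᵖ) (v : Z.obj U) :
    (Iv.ev e h).app U v = h.app U (ppair (e.app U (tmElt U)) v) := by
  rw [ev_eq]
  have : (prod.lift (terminal.from Z ≫ e) (𝟙 Z) ≫ h).app U v
      = h.app U ((prod.lift (terminal.from Z ≫ e) (𝟙 Z)).app U v) := rfl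
  rw [this, lift_app]
  have h1 : (terminal.from Z ≫ e).app U v = e.app U (tmElt U) := by
    show e.app U ((terminal.from Z).app U v) = _
    rw [tm_ext ((terminal.from Z).app U v) (tmElt U)]
  have h2 : (𝟙 Z : Z ⟶ Z).app U v = v := rfl
  rw [h1, h2]

end Ev

section Weq

variable {M : PshModel A}

lemma W_of_iso {X Y : Psh A} (f : X ⟶ Y) [IsIso f] : M.W f := by
  refine M.weq_retract f (𝟙 X) (𝟙 X) (𝟙 X) (inv f) f (by simp) (by simp) (by simp) (by simp)
    (M.weq_id X)

variable (Iv : PshInterval M)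

/-- the inclusion of `Z` into `I × Z` at the point `e` -/
noncomputable def endpt (e : ⊤_ (Psh A) ⟶ Iv.I) (Z : Psh A) : Z ⟶ Iv.I ⨯ Z :=
  prod.lift (terminal.from Z ≫ e) (𝟙 Z)

@[simp] lemma endpt_snd (e : ⊤_ (Psh A) ⟶ Iv.I) (Z : Psh A) :
    endpt Iv e Z ≫ prod.snd = 𝟙 Z := prod.lift_snd _ _

instance endpt_mono (e : ⊤_ (Psh A) ⟶ Iv.I) (Z : Psh A) : Mono (endpt Iv e Z) := by
  have : IsSplitMono (endpt Iv e Z) := IsSplitMono.mk' ⟨prod.snd, endpt_snd Iv e Z⟩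
  infer_instance

lemma endpt_weq (e : ⊤_ (Psh A) ⟶ Iv.I) (Z : Psh A) : M.W (endpt Iv e Z) := by
  refine M.weq_cancel_right _ prod.snd (Iv.proj_weq Z) ?_
  rw [endpt_snd]
  exact M.weq_id Z

lemma ev_eq_endpt (e : ⊤_ (Psh A) ⟶ Iv.I) {Z X : Psh A} (h : Iv.I ⨯ Z ⟶ X) :
    Iv.ev e h = endpt Iv e Z ≫ h := rfl

end Weq


section Slice

variable {M : PshModel A} (Iv : PshInterval M)

/-- the slice `{e} × V` inside `I × V` -/
noncomputable def slc (e : ⊤_ (Psh A) ⟶ Iv.I) (V : Psh A) : Subfunctor (Iv.I ⨯ V) :=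
  pre (prod.fst) (rng e)

/-- the cylinder `I × S` inside `I × V` -/
noncomputable def cyl {V : Psh A} (S : Subfunctor V) : Subfunctor (Iv.I ⨯ V) :=
  pre (prod.snd) S

lemma endpt_app (e : ⊤_ (Psh A) ⟶ Iv.I) {V : Psh A} {U : Aᵒᵖ} (v : V.obj U) :
    (endpt Iv e V).app U v = ppair (e.app U (tmElt U)) v := by
  show (prod.lift (terminal.from V ≫ e) (𝟙 V)).app U v = _
  rw [lift_app]
  have h1 : (terminal.from V ≫ e).app U v = e.app U (tmElt U) := by
    show e.app U ((terminal.from V).app U v) = _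
    rw [tm_ext ((terminal.from V).app U v) (tmElt U)]
  rw [h1]
  rfl

lemma mem_slc_of {e : ⊤_ (Psh A) ⟶ Iv.I} {V : Psh A} {U : Aᵒᵖ} {x : (Iv.I ⨯ V).obj U}
    (w : (⊤_ (Psh A)).obj U) (hw : (prod.fst : Iv.I ⨯ V ⟶ Iv.I).app U x = e.app U w) :
    x ∈ (slc Iv e V).obj U := ⟨w, hw.symm⟩

noncomputable def toSlc (e : ⊤_ (Psh A) ⟶ Iv.I) (V : Psh A) : V ⟶ (slc Iv e V).toFunctor :=
  (slc Iv e V).lift (endpt Iv e V) (by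
    rintro U _ ⟨x, rfl⟩
    refine mem_slc_of Iv (tmElt U) ?_
    rw [endpt_app, ppair_fst])

lemma toSlc_app (e : ⊤_ (Psh A) ⟶ Iv.I) (V : Psh A) {U : Aᵒᵖ} (v : V.obj U) :
    ((toSlc Iv e V).app U v).1 = ppair (e.app U (tmElt U)) v := endpt_app Iv e v

lemma slc_el_eq {e : ⊤_ (Psh A) ⟶ Iv.I} {V : Psh A} {U : Aᵒᵖ} (x : (Iv.I ⨯ V).obj U)
    (hx : x ∈ (slc Iv e V).obj U) :
    x = ppair (e.app U (tmElt U)) ((prod.snd : Iv.I ⨯ V ⟶ V).app U x) := by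
  obtain ⟨w, hw⟩ := hx
  conv_lhs => rw [← ppair_eta x]
  rw [← hw, tm_ext (tmElt U) w]

lemma toSlc_bij (e : ⊤_ (Psh A) ⟶ Iv.I) (V : Psh A) (U : Aᵒᵖ) :
    Function.Bijective ((toSlc Iv e V).app U) := by
  constructor
  · intro a b hab
    have h := congrArg Subtype.val hab
    rw [toSlc_app, toSlc_app] at h
    have := congrArg ((prod.snd : Iv.I ⨯ V ⟶ V).app U) h
    simpa using this
  · rintro ⟨x, hx⟩
    refine ⟨(prod.snd : Iv.I ⨯ V ⟶ V).app U x, Subtype.ext ?_⟩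
    rw [toSlc_app]
    exact (slc_el_eq Iv x hx).symm

instance toSlc_iso (e : ⊤_ (Psh A) ⟶ Iv.I) (V : Psh A) : IsIso (toSlc Iv e V) := by
  have : ∀ (U : Aᵒᵖ), IsIso ((toSlc Iv e V).app U) :=
    fun U => (isIso_iff_bijective _).2 (toSlc_bij Iv e V U)
  exact NatIso.isIso_of_isIso_app _

noncomputable def toCyl {V : Psh A} (S : Subfunctor V) :
    Iv.I ⨯ S.toFunctor ⟶ (cyl Iv S).toFunctor :=
  (cyl Iv S).lift (prod.map (𝟙 Iv.I) S.ι) (by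
    rintro U _ ⟨x, rfl⟩
    show (prod.snd : Iv.I ⨯ V ⟶ V).app U ((prod.map (𝟙 Iv.I) S.ι).app U x) ∈ S.obj U
    rw [prodmap_app, ppair_snd]
    exact ((prod.snd : Iv.I ⨯ S.toFunctor ⟶ S.toFunctor).app U x).2)

lemma toCyl_app {V : Psh A} (S : Subfunctor V) {U : Aᵒᵖ} (x : (Iv.I ⨯ S.toFunctor).obj U) :
    ((toCyl Iv S).app U x).1
      = ppair ((prod.fst : Iv.I ⨯ S.toFunctor ⟶ Iv.I).app U x)
          (((prod.snd : Iv.I ⨯ S.toFunctor ⟶ S.toFunctor).app U x) : V.obj U) := by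
  show (prod.map (𝟙 Iv.I) S.ι).app U x = _
  rw [prodmap_app]
  rfl

lemma toCyl_bij {V : Psh A} (S : Subfunctor V) (U : Aᵒᵖ) :
    Function.Bijective ((toCyl Iv S).app U) := by
  constructor
  · intro a b hab
    have h := congrArg Subtype.val hab
    rw [toCyl_app, toCyl_app] at h
    have h1 := congrArg ((prod.fst : Iv.I ⨯ V ⟶ Iv.I).app U) h
    have h2 := congrArg ((prod.snd : Iv.I ⨯ V ⟶ V).app U) h
    rw [ppair_fst, ppair_fst] at h1
    rw [ppair_snd, ppair_snd] at h2
    exact prod_app_ext h1 (Subtype.ext h2)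
  · rintro ⟨x, hx⟩
    have hx' : (prod.snd : Iv.I ⨯ V ⟶ V).app U x ∈ S.obj U := hx
    refine ⟨ppair ((prod.fst : Iv.I ⨯ V ⟶ Iv.I).app U x) (Subtype.mk _ hx' : S.toFunctor.obj U), Subtype.ext ?_⟩
    erw [toCyl_app, ppair_fst, ppair_snd]
    exact ppair_eta x

instance toCyl_iso {V : Psh A} (S : Subfunctor V) : IsIso (toCyl Iv S) := by
  have : ∀ (U : Aᵒᵖ), IsIso ((toCyl Iv S).app U) :=
    fun U => (isIso_iff_bijective _).2 (toCyl_bij Iv S U)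
  exact NatIso.isIso_of_isIso_app _

end Slice


section LLP

variable {M : PshModel A} (Iv : PshInterval M)

lemma key_comm (e : ⊤_ (Psh A) ⟶ Iv.I) {V : Psh A} (B : Subfunctor V) :
    endpt Iv e B.toFunctor ≫ prod.map (𝟙 Iv.I) B.ι = B.ι ≫ endpt Iv e V := by
  show prod.lift (terminal.from _ ≫ e) (𝟙 _) ≫ prod.map (𝟙 Iv.I) B.ι
      = B.ι ≫ prod.lift (terminal.from V ≫ e) (𝟙 V)
  rw [prod.lift_map, prod.comp_lift]
  have h : B.ι ≫ terminal.from V = terminal.from _ := Subsingleton.elim _ _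
  rw [Category.comp_id, Category.id_comp, ← Category.assoc, h, Category.comp_id]

lemma sq_comm (e : ⊤_ (Psh A) ⟶ Iv.I) {V : Psh A} (B : Subfunctor V) :
    endpt Iv e B.toFunctor
        ≫ (toCyl Iv B ≫ Subfunctor.homOfLe (le_sup2_right (slc Iv e V) (cyl Iv B)))
      = (B.ι ≫ toSlc Iv e V) ≫ Subfunctor.homOfLe (le_sup2_left (slc Iv e V) (cyl Iv B)) := by
  rw [← cancel_mono (sup2 (slc Iv e V) (cyl Iv B)).ι]
  simp only [Category.assoc, Subfunctor.homOfLe_ι, Subfunctor.lift_ι]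
  show endpt Iv e B.toFunctor ≫ prod.map (𝟙 Iv.I) B.ι = B.ι ≫ endpt Iv e V
  exact key_comm Iv e B

lemma llp_incl (e : ⊤_ (Psh A) ⟶ Iv.I) {V : Psh A} (B : Subfunctor V) {Ed Bs : Psh A}
    (p : Ed ⟶ Bs) (hp : M.Fib p) :
    HasLiftingProperty
      (Subfunctor.homOfLe (le_sup2_left (slc Iv e V) (cyl Iv B))) p := by
  constructor
  intro u v sq
  haveI := M.lift_trivCof_fib (endpt Iv e B.toFunctor) p (endpt_mono Iv e _)
    (endpt_weq Iv e _) hp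
  have comm : (B.ι ≫ toSlc Iv e V ≫ u) ≫ p
      = endpt Iv e B.toFunctor
          ≫ (toCyl Iv B ≫ Subfunctor.homOfLe (le_sup2_right (slc Iv e V) (cyl Iv B)) ≫ v) := by
    have h' := congrArg (fun t => t ≫ v) (sq_comm Iv e B)
    simp only [Category.assoc] at h' ⊢
    rw [sq.w]
    exact h'.symm
  have sq2 : CommSq (B.ι ≫ toSlc Iv e V ≫ u) (endpt Iv e B.toFunctor) p
      (toCyl Iv B ≫ Subfunctor.homOfLe (le_sup2_right (slc Iv e V) (cyl Iv B)) ≫ v) := ⟨comm⟩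
  set σ : (cyl Iv B).toFunctor ⟶ Ed := inv (toCyl Iv B) ≫ sq2.lift with hσ
  have hagree : ∀ (U : Aᵒᵖ) (x : (Iv.I ⨯ V).obj U) (hS : x ∈ (slc Iv e V).obj U)
      (hC : x ∈ (cyl Iv B).obj U), u.app U ⟨x, hS⟩ = σ.app U ⟨x, hC⟩ := by
    intro U x hS hC
    have hC' : (prod.snd : Iv.I ⨯ V ⟶ V).app U x ∈ B.obj U := hC
    set bb : B.toFunctor.obj U := ⟨(prod.snd : Iv.I ⨯ V ⟶ V).app U x, hC'⟩ with hbb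
    have key1 : (toCyl Iv B).app U ((endpt Iv e B.toFunctor).app U bb) = ⟨x, hC⟩ := by
      apply Subtype.ext
      rw [toCyl_app, endpt_app, ppair_fst, ppair_snd]
      exact (slc_el_eq Iv x hS).symm
    have key2 : (inv (toCyl Iv B)).app U ⟨x, hC⟩ = (endpt Iv e B.toFunctor).app U bb := by
      apply (toCyl_bij Iv B U).1
      rw [key1]
      exact ConcreteCategory.congr_hom (congr_app (IsIso.inv_hom_id (toCyl Iv B)) U) ⟨x, hC⟩
    have e1 : σ.app U ⟨x, hC⟩ = sq2.lift.app U ((endpt Iv e B.toFunctor).app U bb) := by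
      rw [hσ]
      show sq2.lift.app U ((inv (toCyl Iv B)).app U ⟨x, hC⟩) = _
      rw [key2]
    have e2 : sq2.lift.app U ((endpt Iv e B.toFunctor).app U bb)
        = u.app U ((toSlc Iv e V).app U bb.1) := by
      have := ConcreteCategory.congr_hom (congr_app sq2.fac_left U) bb
      exact this
    have e3 : (toSlc Iv e V).app U bb.1 = ⟨x, hS⟩ := by
      apply Subtype.ext
      rw [toSlc_app]
      exact (slc_el_eq Iv x hS).symm
    rw [e1, e2, e3]
  refine ⟨⟨⟨glue _ _ u σ hagree, glue_left _ _ _ _ _, ?_⟩⟩⟩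
  apply sup2_hom_ext
  · rw [← Category.assoc, glue_left, sq.w]
  · rw [← Category.assoc, glue_right, hσ, Category.assoc, sq2.fac_right]
    rw [IsIso.inv_hom_id_assoc]

lemma W_homOfLe_sup2 (e : ⊤_ (Psh A) ⟶ Iv.I) {V : Psh A} (B : Subfunctor V) :
    M.W (Subfunctor.homOfLe (le_sup2_left (slc Iv e V) (cyl Iv B))) := by
  obtain ⟨Mid, i', p', mono_i, wi, fibp, hfact⟩ :=
    M.fact_trivCof_fib (Subfunctor.homOfLe (le_sup2_left (slc Iv e V) (cyl Iv B)))
  haveI := llp_incl Iv e B p' fibp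
  have sq : CommSq i' (Subfunctor.homOfLe (le_sup2_left (slc Iv e V) (cyl Iv B))) p' (𝟙 _) :=
    ⟨by rw [hfact, Category.comp_id]⟩
  refine M.weq_retract _ i' (𝟙 _) (𝟙 _) sq.lift p' (by simp) sq.fac_right ?_ ?_ wi
  · rw [Category.id_comp, sq.fac_left]
  · rw [hfact, Category.id_comp]

lemma W_sup2_ι (e : ⊤_ (Psh A) ⟶ Iv.I) {V : Psh A} (B : Subfunctor V) :
    M.W (sup2 (slc Iv e V) (cyl Iv B)).ι := by
  have h2 : M.W (toSlc Iv e V ≫ Subfunctor.homOfLe (le_sup2_left (slc Iv e V) (cyl Iv B))) :=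
    M.weq_comp _ _ (W_of_iso _) (W_homOfLe_sup2 Iv e B)
  refine M.weq_cancel_left _ _ h2 ?_
  have h3 : toSlc Iv e V ≫ (slc Iv e V).ι = endpt Iv e V := Subfunctor.lift_ι _ _
  rw [Category.assoc, Subfunctor.homOfLe_ι, h3]
  exact endpt_weq Iv e V

lemma extend_union (e : ⊤_ (Psh A) ⟶ Iv.I) {V : Psh A} (B : Subfunctor V) {X : Psh A}
    (hX : M.Fib (terminal.from X)) (φ : (sup2 (slc Iv e V) (cyl Iv B)).toFunctor ⟶ X) :
    ∃ H : Iv.I ⨯ V ⟶ X, (sup2 (slc Iv e V) (cyl Iv B)).ι ≫ H = φ := by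
  haveI := M.lift_trivCof_fib (sup2 (slc Iv e V) (cyl Iv B)).ι (terminal.from X)
    inferInstance (W_sup2_ι Iv e B) hX
  have sq : CommSq φ (sup2 (slc Iv e V) (cyl Iv B)).ι (terminal.from X) (terminal.from _) :=
    ⟨Subsingleton.elim _ _⟩
  exact ⟨sq.lift, sq.fac_left⟩

end LLP


section Ext1

variable {M : PshModel A} (Iv : PshInterval M)

lemma ext1 (e : ⊤_ (Psh A) ⟶ Iv.I) {Z X : Psh A} (hX : M.Fib (terminal.from X))
    (S : Subfunctor Z) (α : Z ⟶ X) (β : Iv.I ⨯ S.toFunctor ⟶ X)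
    (hcomp : Iv.ev e β = S.ι ≫ α) :
    ∃ H : Iv.I ⨯ Z ⟶ X, Iv.ev e H = α ∧ prod.map (𝟙 Iv.I) S.ι ≫ H = β := by
  have hagree : ∀ (U : Aᵒᵖ) (x : (Iv.I ⨯ Z).obj U) (hS : x ∈ (slc Iv e Z).obj U)
      (hC : x ∈ (cyl Iv S).obj U),
      (inv (toSlc Iv e Z) ≫ α).app U ⟨x, hS⟩ = (inv (toCyl Iv S) ≫ β).app U ⟨x, hC⟩ := by
    intro U x hS hC
    have hC' : (prod.snd : Iv.I ⨯ Z ⟶ Z).app U x ∈ S.obj U := hC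
    set z := (prod.snd : Iv.I ⨯ Z ⟶ Z).app U x with hz
    have k1 : (inv (toSlc Iv e Z)).app U ⟨x, hS⟩ = z := by
      apply (toSlc_bij Iv e Z U).1
      have h' : (toSlc Iv e Z).app U ((inv (toSlc Iv e Z)).app U ⟨x, hS⟩) = ⟨x, hS⟩ :=
        ConcreteCategory.congr_hom (congr_app (IsIso.inv_hom_id (toSlc Iv e Z)) U) ⟨x, hS⟩
      rw [h']
      apply Subtype.ext
      rw [toSlc_app]
      exact slc_el_eq Iv x hS
    have k2 : (inv (toCyl Iv S)).app U ⟨x, hC⟩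
        = (endpt Iv e S.toFunctor).app U (Subtype.mk z hC' : S.toFunctor.obj U) := by
      apply (toCyl_bij Iv S U).1
      have h' : (toCyl Iv S).app U ((inv (toCyl Iv S)).app U ⟨x, hC⟩) = ⟨x, hC⟩ :=
        ConcreteCategory.congr_hom (congr_app (IsIso.inv_hom_id (toCyl Iv S)) U) ⟨x, hC⟩
      rw [h']
      apply Subtype.ext
      erw [toCyl_app, endpt_app, ppair_fst, ppair_snd]
      exact slc_el_eq Iv x hS
    show α.app U ((inv (toSlc Iv e Z)).app U ⟨x, hS⟩)
        = β.app U ((inv (toCyl Iv S)).app U ⟨x, hC⟩)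
    rw [k1, k2]
    have h2 : β.app U ((endpt Iv e S.toFunctor).app U (Subtype.mk z hC' : S.toFunctor.obj U))
        = (Iv.ev e β).app U (Subtype.mk z hC' : S.toFunctor.obj U) := rfl
    rw [h2, hcomp]
    rfl
  set φ := glue _ _ (inv (toSlc Iv e Z) ≫ α) (inv (toCyl Iv S) ≫ β) hagree with hφ
  obtain ⟨H, hH⟩ := extend_union Iv e (B := S) hX φ
  have hslc : toSlc Iv e Z ≫ (slc Iv e Z).ι = endpt Iv e Z := Subfunctor.lift_ι _ _
  have hcylι : toCyl Iv S ≫ (cyl Iv S).ι = prod.map (𝟙 Iv.I) S.ι := Subfunctor.lift_ι _ _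
  refine ⟨H, ?_, ?_⟩
  · have e0 : Iv.ev e H = toSlc Iv e Z
        ≫ Subfunctor.homOfLe (le_sup2_left (slc Iv e Z) (cyl Iv S))
        ≫ ((sup2 (slc Iv e Z) (cyl Iv S)).ι ≫ H) := by
      rw [← Category.assoc (Subfunctor.homOfLe _), Subfunctor.homOfLe_ι,
        ← Category.assoc, hslc]
      rfl
    rw [e0, hH, hφ, glue_left]
    simp
  · have e0 : prod.map (𝟙 Iv.I) S.ι ≫ H = toCyl Iv S
        ≫ Subfunctor.homOfLe (le_sup2_right (slc Iv e Z) (cyl Iv S))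
        ≫ ((sup2 (slc Iv e Z) (cyl Iv S)).ι ≫ H) := by
      rw [← Category.assoc (Subfunctor.homOfLe _), Subfunctor.homOfLe_ι,
        ← Category.assoc, hcylι]
    rw [e0, hH, hφ, glue_right]
    simp

end Ext1

section Square

variable {M : PshModel A} (Iv : PshInterval M)

/-- first projection, elementwise -/
noncomputable def pfst {P Q : Psh A} {U : Aᵒᵖ} (x : (P ⨯ Q).obj U) : P.obj U :=
  (prod.fst : P ⨯ Q ⟶ P).app U x

/-- second projection, elementwise -/
noncomputable def psnd {P Q : Psh A} {U : Aᵒᵖ} (x : (P ⨯ Q).obj U) : Q.obj U :=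
  (prod.snd : P ⨯ Q ⟶ Q).app U x

@[simp] lemma pfst_ppair {P Q : Psh A} {U : Aᵒᵖ} (t : P.obj U) (v : Q.obj U) :
    pfst (ppair t v) = t := ppair_fst t v

@[simp] lemma psnd_ppair {P Q : Psh A} {U : Aᵒᵖ} (t : P.obj U) (v : Q.obj U) :
    psnd (ppair t v) = v := ppair_snd t v

lemma pfst_map {P Q : Psh A} {U V' : Aᵒᵖ} (i : U ⟶ V') (x : (P ⨯ Q).obj U) :
    pfst ((P ⨯ Q).map i x) = P.map i (pfst x) := NatTrans.naturality_apply (prod.fst : P ⨯ Q ⟶ P) i x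

lemma psnd_map {P Q : Psh A} {U V' : Aᵒᵖ} (i : U ⟶ V') (x : (P ⨯ Q).obj U) :
    psnd ((P ⨯ Q).map i x) = Q.map i (psnd x) := NatTrans.naturality_apply (prod.snd : P ⨯ Q ⟶ Q) i x

lemma peta {P Q : Psh A} {U : Aᵒᵖ} (x : (P ⨯ Q).obj U) : ppair (pfst x) (psnd x) = x :=
  ppair_eta x

lemma endpoint_disjoint (U : Aᵒᵖ) (w w' : (⊤_ (Psh A)).obj U) :
    Iv.i0.app U w ≠ Iv.i1.app U w' := by
  intro hEq
  -- a two-valued constant presheaf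
  have F2 : Psh A := (Functor.const Aᵒᵖ).obj (ULift Bool)
  set t : yoneda.obj U.unop ⟶ ⊤_ (Psh A) := terminal.from _ with ht
  have h0 : t ≫ Iv.i0 = t ≫ Iv.i1 := by
    apply yonedaEquiv.injective
    rw [CategoryTheory.yonedaEquiv_comp, CategoryTheory.yonedaEquiv_comp]
    show Iv.i0.app U (yonedaEquiv t) = Iv.i1.app U (yonedaEquiv t)
    rw [tm_ext (yonedaEquiv t) w, hEq, tm_ext w' w]
  haveI := Iv.endpoints_mono
  have h1 : (t ≫ coprod.inl) ≫ coprod.desc Iv.i0 Iv.i1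
      = (t ≫ coprod.inr) ≫ coprod.desc Iv.i0 Iv.i1 := by
    simp only [Category.assoc, coprod.inl_desc, coprod.inr_desc]
    exact h0
  have h2 : t ≫ (coprod.inl : ⊤_ (Psh A) ⟶ _) = t ≫ (coprod.inr : ⊤_ (Psh A) ⟶ _) :=
    (cancel_mono (coprod.desc Iv.i0 Iv.i1)).1 h1
  have h3 := congrArg (fun q => q ≫ coprod.desc
    (⟨fun _ => TypeCat.ofHom fun _ => ⟨true⟩, by intros; rfl⟩ : ⊤_ (Psh A) ⟶ (Functor.const Aᵒᵖ).obj (ULift Bool))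
    (⟨fun _ => TypeCat.ofHom fun _ => ⟨false⟩, by intros; rfl⟩ : ⊤_ (Psh A) ⟶ (Functor.const Aᵒᵖ).obj (ULift Bool)))
    h2
  simp only [Category.assoc, coprod.inl_desc, coprod.inr_desc] at h3
  have h4 := ConcreteCategory.congr_hom (congr_app h3 U) (𝟙 U.unop)
  have h5 : true = false := congrArg ULift.down h4
  exact Bool.noConfusion h5

variable {Z X : Psh A} (S : Subfunctor Z) (H K : Iv.I ⨯ Z ⟶ X) (e' : ⊤_ (Psh A) ⟶ Iv.I)

lemma natHK (Hm : Iv.I ⨯ Z ⟶ X) {U V' : Aᵒᵖ} (i : U ⟶ V') (t : Iv.I.obj U) (z : Z.obj U) :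
    Hm.app V' (ppair (Iv.I.map i t) (Z.map i z)) = X.map i (Hm.app U (ppair t z)) := by
  rw [← map_ppair]
  exact NatTrans.naturality_apply Hm i _

lemma cylL_app (Hm : Iv.I ⨯ Z ⟶ X) {U : Aᵒᵖ} (t : Iv.I.obj U) (zs : S.toFunctor.obj U) :
    (prod.map (𝟙 Iv.I) S.ι ≫ Hm).app U (ppair t zs) = Hm.app U (ppair t zs.1) := by
  show Hm.app U ((prod.map (𝟙 Iv.I) S.ι).app U (ppair t zs)) = _
  rw [prodmap_app, ppair_fst, ppair_snd]
  rfl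

open Classical in
/-- the partial map used in the homotopy-of-homotopies construction -/
noncomputable def sqFun (U : Aᵒᵖ) (x : (Iv.I ⨯ (Iv.I ⨯ Z)).obj U) : X.obj U :=
  if hz : psnd (psnd x) ∈ S.obj U then
    (prod.map (𝟙 Iv.I) S.ι ≫ H).app U (ppair (pfst x) (Subtype.mk (psnd (psnd x)) hz : S.toFunctor.obj U))
  else if pfst (psnd x) ∈ Set.range (Iv.i0.app U) then
    H.app U (ppair (pfst x) (psnd (psnd x)))
  else if pfst (psnd x) ∈ Set.range (Iv.i1.app U) then
    K.app U (ppair (pfst x) (psnd (psnd x)))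
  else (Iv.ev e' H).app U (psnd (psnd x))

lemma sqFun_eq1 {U : Aᵒᵖ} {x : (Iv.I ⨯ (Iv.I ⨯ Z)).obj U}
    (hz : psnd (psnd x) ∈ S.obj U) :
    sqFun Iv S H K e' U x = H.app U (ppair (pfst x) (psnd (psnd x))) := by
  unfold sqFun
  erw [dif_pos hz, cylL_app]

lemma sqFun_eq1K (hHK : prod.map (𝟙 Iv.I) S.ι ≫ H = prod.map (𝟙 Iv.I) S.ι ≫ K)
    {U : Aᵒᵖ} {x : (Iv.I ⨯ (Iv.I ⨯ Z)).obj U} (hz : psnd (psnd x) ∈ S.obj U) :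
    sqFun Iv S H K e' U x = K.app U (ppair (pfst x) (psnd (psnd x))) := by
  unfold sqFun
  erw [dif_pos hz, hHK, cylL_app]

lemma sqFun_eq2 {U : Aᵒᵖ} {x : (Iv.I ⨯ (Iv.I ⨯ Z)).obj U}
    (hz : ¬ psnd (psnd x) ∈ S.obj U) (h0 : pfst (psnd x) ∈ Set.range (Iv.i0.app U)) :
    sqFun Iv S H K e' U x = H.app U (ppair (pfst x) (psnd (psnd x))) := by
  unfold sqFun
  rw [dif_neg hz, if_pos h0]

lemma sqFun_eq3 {U : Aᵒᵖ} {x : (Iv.I ⨯ (Iv.I ⨯ Z)).obj U}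
    (hz : ¬ psnd (psnd x) ∈ S.obj U) (h0 : ¬ pfst (psnd x) ∈ Set.range (Iv.i0.app U))
    (h1 : pfst (psnd x) ∈ Set.range (Iv.i1.app U)) :
    sqFun Iv S H K e' U x = K.app U (ppair (pfst x) (psnd (psnd x))) := by
  unfold sqFun
  rw [dif_neg hz, if_neg h0, if_pos h1]

lemma sqFun_eq4 {U : Aᵒᵖ} {x : (Iv.I ⨯ (Iv.I ⨯ Z)).obj U}
    (hz : ¬ psnd (psnd x) ∈ S.obj U) (h0 : ¬ pfst (psnd x) ∈ Set.range (Iv.i0.app U))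
    (h1 : ¬ pfst (psnd x) ∈ Set.range (Iv.i1.app U)) :
    sqFun Iv S H K e' U x = (Iv.ev e' H).app U (psnd (psnd x)) := by
  unfold sqFun
  rw [dif_neg hz, if_neg h0, if_neg h1]

end Square


section Square2

variable {M : PshModel A} (Iv : PshInterval M)
variable {Z X : Psh A} (S : Subfunctor Z) (H K : Iv.I ⨯ Z ⟶ X) (e' : ⊤_ (Psh A) ⟶ Iv.I)

lemma mem_sup2_elim {F : Psh A} {S' T' : Subfunctor F} {U : Aᵒᵖ} {x : F.obj U}
    (h : x ∈ (sup2 S' T').obj U) : x ∈ S'.obj U ∨ x ∈ T'.obj U := h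

lemma mem_sup2_left' {F : Psh A} {S' T' : Subfunctor F} {U : Aᵒᵖ} {x : F.obj U}
    (h : x ∈ S'.obj U) : x ∈ (sup2 S' T').obj U := Or.inl h

lemma mem_sup2_right' {F : Psh A} {S' T' : Subfunctor F} {U : Aᵒᵖ} {x : F.obj U}
    (h : x ∈ T'.obj U) : x ∈ (sup2 S' T').obj U := Or.inr h

/-- the subobject of `I × (I × Z)` on which the homotopy-of-homotopies is prescribed -/
noncomputable def sqDom : Subfunctor (Iv.I ⨯ (Iv.I ⨯ Z)) :=
  sup2 (slc Iv e' (Iv.I ⨯ Z))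
    (cyl Iv (sup2 (sup2 (slc Iv Iv.i0 Z) (slc Iv Iv.i1 Z)) (cyl Iv S)))

/-- the prescribed map on the subobject -/
noncomputable def sqMap (hHK : prod.map (𝟙 Iv.I) S.ι ≫ H = prod.map (𝟙 Iv.I) S.ι ≫ K)
    (hEv : Iv.ev e' H = Iv.ev e' K) : (sqDom Iv S e').toFunctor ⟶ X where
  app U := TypeCat.ofHom fun x => sqFun Iv S H K e' U x.1
  naturality := by
    intro U V' i
    ext x
    show sqFun Iv S H K e' V' ((Iv.I ⨯ (Iv.I ⨯ Z)).map i x.1)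
        = X.map i (sqFun Iv S H K e' U x.1)
    set y := (Iv.I ⨯ (Iv.I ⨯ Z)).map i x.1 with hy
    have hT : pfst y = Iv.I.map i (pfst x.1) := pfst_map i x.1
    have hV : psnd y = (Iv.I ⨯ Z).map i (psnd x.1) := psnd_map i x.1
    have hS' : pfst (psnd y) = Iv.I.map i (pfst (psnd x.1)) := by rw [hV, pfst_map]
    have hZ' : psnd (psnd y) = Z.map i (psnd (psnd x.1)) := by rw [hV, psnd_map]
    by_cases hz : psnd (psnd x.1) ∈ S.obj U
    · have hz' : psnd (psnd y) ∈ S.obj V' := by rw [hZ']; exact S.map i hz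
      rw [sqFun_eq1 Iv S H K e' hz, sqFun_eq1 Iv S H K e' hz', hT, hZ']
      exact natHK Iv H i _ _
    · by_cases h0 : pfst (psnd x.1) ∈ Set.range (Iv.i0.app U)
      · have h0' : pfst (psnd y) ∈ Set.range (Iv.i0.app V') := by
          rw [hS']; exact (rng Iv.i0).map i h0
        have val' : sqFun Iv S H K e' V' y
            = H.app V' (ppair (pfst y) (psnd (psnd y))) := by
          by_cases hz' : psnd (psnd y) ∈ S.obj V'
          · exact sqFun_eq1 Iv S H K e' hz'
          · exact sqFun_eq2 Iv S H K e' hz' h0'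
        rw [sqFun_eq2 Iv S H K e' hz h0, val', hT, hZ']
        exact natHK Iv H i _ _
      · by_cases h1 : pfst (psnd x.1) ∈ Set.range (Iv.i1.app U)
        · have h1' : pfst (psnd y) ∈ Set.range (Iv.i1.app V') := by
            rw [hS']; exact (rng Iv.i1).map i h1
          have h0' : ¬ pfst (psnd y) ∈ Set.range (Iv.i0.app V') := by
            intro hcon
            obtain ⟨w0, hw0⟩ := hcon
            obtain ⟨w1, hw1⟩ := h1
            have hnat : Iv.I.map i (pfst (psnd x.1))
                = Iv.i1.app V' ((⊤_ (Psh A)).map i w1) := by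
              rw [← hw1]
              exact (NatTrans.naturality_apply Iv.i1 i w1).symm
            exact endpoint_disjoint Iv V' w0 _ (hw0.trans (hS'.trans hnat))
          have val' : sqFun Iv S H K e' V' y
              = K.app V' (ppair (pfst y) (psnd (psnd y))) := by
            by_cases hz' : psnd (psnd y) ∈ S.obj V'
            · exact sqFun_eq1K Iv S H K e' hHK hz'
            · exact sqFun_eq3 Iv S H K e' hz' h0' h1'
          rw [sqFun_eq3 Iv S H K e' hz h0 h1, val', hT, hZ']
          exact natHK Iv K i _ _
        · have hx4 : x.1 ∈ (slc Iv e' (Iv.I ⨯ Z)).obj U := by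
            rcases mem_sup2_elim x.2 with h | h
            · exact h
            · exfalso
              rcases mem_sup2_elim h with hh | hh
              · rcases mem_sup2_elim hh with hhh | hhh
                · exact h0 hhh
                · exact h1 hhh
              · exact hz hh
          obtain ⟨w, hw⟩ := hx4
          have hw' : e'.app U w = pfst x.1 := hw
          have hTval : pfst y = e'.app V' (tmElt V') := by
            rw [hT, ← hw']
            have hnat : Iv.I.map i (e'.app U w) = e'.app V' ((⊤_ (Psh A)).map i w) :=
              (NatTrans.naturality_apply e' i w).symm
            rw [hnat, tm_ext ((⊤_ (Psh A)).map i w) (tmElt V')]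
          have hRHS : X.map i ((Iv.ev e' H).app U (psnd (psnd x.1)))
              = (Iv.ev e' H).app V' (psnd (psnd y)) := by
            rw [hZ']
            exact (NatTrans.naturality_apply (Iv.ev e' H) i _).symm
          rw [sqFun_eq4 Iv S H K e' hz h0 h1, hRHS]
          by_cases hz' : psnd (psnd y) ∈ S.obj V'
          · rw [sqFun_eq1 Iv S H K e' hz', hTval]
            exact (ev_app Iv e' H V' _).symm
          · by_cases h0' : pfst (psnd y) ∈ Set.range (Iv.i0.app V')
            · rw [sqFun_eq2 Iv S H K e' hz' h0', hTval]
              exact (ev_app Iv e' H V' _).symm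
            · by_cases h1' : pfst (psnd y) ∈ Set.range (Iv.i1.app V')
              · rw [sqFun_eq3 Iv S H K e' hz' h0' h1', hTval]
                have hK : K.app V' (ppair (e'.app V' (tmElt V')) (psnd (psnd y)))
                    = (Iv.ev e' K).app V' (psnd (psnd y)) := (ev_app Iv e' K V' _).symm
                rw [hK, ← hEv]
              · rw [sqFun_eq4 Iv S H K e' hz' h0' h1']

noncomputable def jmap0 : Iv.I ⨯ Z ⟶ (sqDom Iv S e').toFunctor :=
  (sqDom Iv S e').lift (prod.map (𝟙 Iv.I) (endpt Iv Iv.i0 Z)) (by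
    rintro U _ ⟨y, rfl⟩
    have hval : (prod.map (𝟙 Iv.I) (endpt Iv Iv.i0 Z)).app U y
        = ppair (pfst y) ((endpt Iv Iv.i0 Z).app U (psnd y)) := by
      rw [prodmap_app]; rfl
    have hmem : pfst (psnd ((prod.map (𝟙 Iv.I) (endpt Iv Iv.i0 Z)).app U y))
        ∈ Set.range (Iv.i0.app U) := by
      rw [hval, psnd_ppair, endpt_app, pfst_ppair]
      exact ⟨tmElt U, rfl⟩
    exact mem_sup2_right' (mem_sup2_left' (mem_sup2_left' hmem)))

noncomputable def jmap1 : Iv.I ⨯ Z ⟶ (sqDom Iv S e').toFunctor :=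
  (sqDom Iv S e').lift (prod.map (𝟙 Iv.I) (endpt Iv Iv.i1 Z)) (by
    rintro U _ ⟨y, rfl⟩
    have hval : (prod.map (𝟙 Iv.I) (endpt Iv Iv.i1 Z)).app U y
        = ppair (pfst y) ((endpt Iv Iv.i1 Z).app U (psnd y)) := by
      rw [prodmap_app]; rfl
    have hmem : pfst (psnd ((prod.map (𝟙 Iv.I) (endpt Iv Iv.i1 Z)).app U y))
        ∈ Set.range (Iv.i1.app U) := by
      rw [hval, psnd_ppair, endpt_app, pfst_ppair]
      exact ⟨tmElt U, rfl⟩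
    exact mem_sup2_right' (mem_sup2_left' (mem_sup2_right' hmem)))

noncomputable def jmapS : Iv.I ⨯ (Iv.I ⨯ S.toFunctor) ⟶ (sqDom Iv S e').toFunctor :=
  (sqDom Iv S e').lift (prod.map (𝟙 Iv.I) (prod.map (𝟙 Iv.I) S.ι)) (by
    rintro U _ ⟨y, rfl⟩
    have hval : (prod.map (𝟙 Iv.I) (prod.map (𝟙 Iv.I) S.ι)).app U y
        = ppair (pfst y) ((prod.map (𝟙 Iv.I) S.ι).app U (psnd y)) := by
      rw [prodmap_app]; rfl
    have hval2 : (prod.map (𝟙 Iv.I) S.ι).app U (psnd y)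
        = ppair (pfst (psnd y)) ((psnd (psnd y)).1) := by
      rw [prodmap_app]; rfl
    have hmem : psnd (psnd ((prod.map (𝟙 Iv.I) (prod.map (𝟙 Iv.I) S.ι)).app U y))
        ∈ S.obj U := by
      rw [hval, psnd_ppair, hval2, psnd_ppair]
      exact (psnd (psnd y)).2
    exact mem_sup2_right' (mem_sup2_right' hmem))

lemma jmap0_comp (hHK : prod.map (𝟙 Iv.I) S.ι ≫ H = prod.map (𝟙 Iv.I) S.ι ≫ K)
    (hEv : Iv.ev e' H = Iv.ev e' K) :
    jmap0 Iv S e' ≫ sqMap Iv S H K e' hHK hEv = H := by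
  ext U y
  show sqFun Iv S H K e' U ((prod.map (𝟙 Iv.I) (endpt Iv Iv.i0 Z)).app U y) = H.app U y
  have hval : (prod.map (𝟙 Iv.I) (endpt Iv Iv.i0 Z)).app U y
      = ppair (pfst y) ((endpt Iv Iv.i0 Z).app U (psnd y)) := by
    rw [prodmap_app]; rfl
  have h1 : pfst ((prod.map (𝟙 Iv.I) (endpt Iv Iv.i0 Z)).app U y) = pfst y := by
    rw [hval, pfst_ppair]
  have h2 : psnd (psnd ((prod.map (𝟙 Iv.I) (endpt Iv Iv.i0 Z)).app U y)) = psnd y := by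
    rw [hval, psnd_ppair, endpt_app, psnd_ppair]
  have h3 : pfst (psnd ((prod.map (𝟙 Iv.I) (endpt Iv Iv.i0 Z)).app U y))
      = Iv.i0.app U (tmElt U) := by
    rw [hval, psnd_ppair, endpt_app, pfst_ppair]
  by_cases hz : psnd (psnd ((prod.map (𝟙 Iv.I) (endpt Iv Iv.i0 Z)).app U y)) ∈ S.obj U
  · rw [sqFun_eq1 Iv S H K e' hz, h1, h2, peta]
  · refine (sqFun_eq2 Iv S H K e' hz ?_).trans ?_
    · rw [h3]; exact ⟨tmElt U, rfl⟩
    · rw [h1, h2, peta]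

lemma jmap1_comp (hHK : prod.map (𝟙 Iv.I) S.ι ≫ H = prod.map (𝟙 Iv.I) S.ι ≫ K)
    (hEv : Iv.ev e' H = Iv.ev e' K) :
    jmap1 Iv S e' ≫ sqMap Iv S H K e' hHK hEv = K := by
  ext U y
  show sqFun Iv S H K e' U ((prod.map (𝟙 Iv.I) (endpt Iv Iv.i1 Z)).app U y) = K.app U y
  have hval : (prod.map (𝟙 Iv.I) (endpt Iv Iv.i1 Z)).app U y
      = ppair (pfst y) ((endpt Iv Iv.i1 Z).app U (psnd y)) := by
    rw [prodmap_app]; rfl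
  have h1 : pfst ((prod.map (𝟙 Iv.I) (endpt Iv Iv.i1 Z)).app U y) = pfst y := by
    rw [hval, pfst_ppair]
  have h2 : psnd (psnd ((prod.map (𝟙 Iv.I) (endpt Iv Iv.i1 Z)).app U y)) = psnd y := by
    rw [hval, psnd_ppair, endpt_app, psnd_ppair]
  have h3 : pfst (psnd ((prod.map (𝟙 Iv.I) (endpt Iv Iv.i1 Z)).app U y))
      = Iv.i1.app U (tmElt U) := by
    rw [hval, psnd_ppair, endpt_app, pfst_ppair]
  have h0 : ¬ pfst (psnd ((prod.map (𝟙 Iv.I) (endpt Iv Iv.i1 Z)).app U y))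
      ∈ Set.range (Iv.i0.app U) := by
    rw [h3]
    rintro ⟨w0, hw0⟩
    exact endpoint_disjoint Iv U w0 (tmElt U) hw0
  by_cases hz : psnd (psnd ((prod.map (𝟙 Iv.I) (endpt Iv Iv.i1 Z)).app U y)) ∈ S.obj U
  · rw [sqFun_eq1K Iv S H K e' hHK hz, h1, h2, peta]
  · refine (sqFun_eq3 Iv S H K e' hz h0 ?_).trans ?_
    · rw [h3]; exact ⟨tmElt U, rfl⟩
    · rw [h1, h2, peta]

lemma jmapS_comp (hHK : prod.map (𝟙 Iv.I) S.ι ≫ H = prod.map (𝟙 Iv.I) S.ι ≫ K)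
    (hEv : Iv.ev e' H = Iv.ev e' K) :
    jmapS Iv S e' ≫ sqMap Iv S H K e' hHK hEv
      = prod.map (𝟙 Iv.I) (prod.snd : Iv.I ⨯ S.toFunctor ⟶ S.toFunctor)
          ≫ (prod.map (𝟙 Iv.I) S.ι ≫ H) := by
  ext U y
  show sqFun Iv S H K e' U ((prod.map (𝟙 Iv.I) (prod.map (𝟙 Iv.I) S.ι)).app U y)
      = (prod.map (𝟙 Iv.I) (prod.snd : Iv.I ⨯ S.toFunctor ⟶ S.toFunctor)
          ≫ (prod.map (𝟙 Iv.I) S.ι ≫ H)).app U y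
  have hval : (prod.map (𝟙 Iv.I) (prod.map (𝟙 Iv.I) S.ι)).app U y
      = ppair (pfst y) ((prod.map (𝟙 Iv.I) S.ι).app U (psnd y)) := by
    rw [prodmap_app]; rfl
  have hval2 : (prod.map (𝟙 Iv.I) S.ι).app U (psnd y)
      = ppair (pfst (psnd y)) ((psnd (psnd y)).1) := by
    rw [prodmap_app]; rfl
  have h1 : pfst ((prod.map (𝟙 Iv.I) (prod.map (𝟙 Iv.I) S.ι)).app U y) = pfst y := by
    rw [hval, pfst_ppair]
  have h2 : psnd (psnd ((prod.map (𝟙 Iv.I) (prod.map (𝟙 Iv.I) S.ι)).app U y))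
      = (psnd (psnd y)).1 := by
    rw [hval, psnd_ppair, hval2, psnd_ppair]
  have hz : psnd (psnd ((prod.map (𝟙 Iv.I) (prod.map (𝟙 Iv.I) S.ι)).app U y)) ∈ S.obj U := by
    rw [h2]; exact (psnd (psnd y)).2
  rw [sqFun_eq1 Iv S H K e' hz, h1, h2]
  -- RHS
  have hr1 : (prod.map (𝟙 Iv.I) (prod.snd : Iv.I ⨯ S.toFunctor ⟶ S.toFunctor)
        ≫ (prod.map (𝟙 Iv.I) S.ι ≫ H)).app U y
      = (prod.map (𝟙 Iv.I) S.ι ≫ H).app U (ppair (pfst y) (psnd (psnd y))) := by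
    show (prod.map (𝟙 Iv.I) S.ι ≫ H).app U
        ((prod.map (𝟙 Iv.I) (prod.snd : Iv.I ⨯ S.toFunctor ⟶ S.toFunctor)).app U y) = _
    rw [prodmap_app]
    rfl
  rw [hr1, cylL_app]

lemma square_lemma (hX : M.Fib (terminal.from X))
    (hHK : prod.map (𝟙 Iv.I) S.ι ≫ H = prod.map (𝟙 Iv.I) S.ι ≫ K)
    (hEv : Iv.ev e' H = Iv.ev e' K) (δ : ⊤_ (Psh A) ⟶ Iv.I) :
    ∃ G : Iv.I ⨯ Z ⟶ X,
      prod.map (𝟙 Iv.I) S.ι ≫ G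
        = (prod.snd : Iv.I ⨯ S.toFunctor ⟶ S.toFunctor)
            ≫ Iv.ev δ (prod.map (𝟙 Iv.I) S.ι ≫ H)
      ∧ Iv.ev Iv.i0 G = Iv.ev δ H ∧ Iv.ev Iv.i1 G = Iv.ev δ K := by
  obtain ⟨Φ, hΦ⟩ := extend_union Iv e'
    (B := sup2 (sup2 (slc Iv Iv.i0 Z) (slc Iv Iv.i1 Z)) (cyl Iv S)) hX
    (sqMap Iv S H K e' hHK hEv)
  have hΦ' : (sqDom Iv S e').ι ≫ Φ = sqMap Iv S H K e' hHK hEv := hΦ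
  have hres0 : prod.map (𝟙 Iv.I) (endpt Iv Iv.i0 Z) ≫ Φ = H := by
    have hlift : jmap0 Iv S e' ≫ (sqDom Iv S e').ι
        = prod.map (𝟙 Iv.I) (endpt Iv Iv.i0 Z) := Subfunctor.lift_ι _ _
    rw [← hlift, Category.assoc, hΦ', jmap0_comp]
  have hres1 : prod.map (𝟙 Iv.I) (endpt Iv Iv.i1 Z) ≫ Φ = K := by
    have hlift : jmap1 Iv S e' ≫ (sqDom Iv S e').ι
        = prod.map (𝟙 Iv.I) (endpt Iv Iv.i1 Z) := Subfunctor.lift_ι _ _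
    rw [← hlift, Category.assoc, hΦ', jmap1_comp]
  have hresS : prod.map (𝟙 Iv.I) (prod.map (𝟙 Iv.I) S.ι) ≫ Φ
      = prod.map (𝟙 Iv.I) (prod.snd : Iv.I ⨯ S.toFunctor ⟶ S.toFunctor)
          ≫ (prod.map (𝟙 Iv.I) S.ι ≫ H) := by
    have hlift : jmapS Iv S e' ≫ (sqDom Iv S e').ι
        = prod.map (𝟙 Iv.I) (prod.map (𝟙 Iv.I) S.ι) := Subfunctor.lift_ι _ _
    rw [← hlift, Category.assoc, hΦ', jmapS_comp]
  refine ⟨Iv.ev δ Φ, ?_, ?_, ?_⟩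
  · rw [← ev_natural Iv δ (prod.map (𝟙 Iv.I) S.ι) Φ, hresS, ev_map_snd]
  · rw [ev_eq_endpt Iv Iv.i0 (Iv.ev δ Φ), ← ev_natural Iv δ (endpt Iv Iv.i0 Z) Φ, hres0]
  · rw [ev_eq_endpt Iv Iv.i1 (Iv.ev δ Φ), ← ev_natural Iv δ (endpt Iv Iv.i1 Z) Φ, hres1]

end Square2


section Boundary

variable (E : EZCat A)

lemma minus_eqToHom {a b : A} (hab : a = b) : E.minus (eqToHom hab) := by
  subst hab
  simpa using E.minus_id a

lemma subpresheaf_eq_top_of_id_mem {b : A} (G : Subfunctor (yoneda.obj b))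
    (hG : 𝟙 b ∈ G.obj (op b)) : G = ⊤ := by
  ext U v
  constructor
  · intro _; trivial
  · intro _
    have h2 : (yoneda.obj b).map (v : U.unop ⟶ b).op (𝟙 b) ∈ G.obj (op U.unop) :=
      G.map ((v : U.unop ⟶ b).op) hG
    have h3 : (yoneda.obj b).map (v : U.unop ⟶ b).op (𝟙 b) = v := by
      show (v : U.unop ⟶ b) ≫ 𝟙 b = v
      simp
    rw [h3] at h2
    exact h2

lemma boundary_factor {b : A} {U : Aᵒᵖ} (g : (yoneda.obj b).obj U)
    (hg : g ∈ (pshBoundary (yoneda.obj b)).obj U) :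
    ∃ (d : A) (m : U.unop ⟶ d) (p : d ⟶ b), E.plus p ∧ E.deg d < E.deg b ∧ m ≫ p = g := by
  obtain ⟨d, m, p, hm, hp, hfact⟩ := E.fact (g : U.unop ⟶ b)
  by_cases hdeg : E.deg d = E.deg b
  · exfalso
    obtain ⟨hdb, hpe⟩ := E.plus_deg_eq p hp hdeg
    have hminus : E.minus (g : U.unop ⟶ b) := by
      rw [← hfact, hpe]
      exact E.minus_comp _ _ hm (minus_eqToHom E hdb)
    obtain ⟨s, hs⟩ := E.EZ1 _ hminus
    obtain ⟨G, hGtop, hmem⟩ := hg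
    apply hGtop
    apply subpresheaf_eq_top_of_id_mem
    have h2 : (yoneda.obj b).map s.op g ∈ G.obj (op b) := G.map s.op hmem
    have h3 : (yoneda.obj b).map s.op g = 𝟙 b := by
      show s ≫ (g : U.unop ⟶ b) = 𝟙 b
      exact hs
    rw [h3] at h2
    exact h2
  · exact ⟨d, m, p, hp, lt_of_le_of_ne (E.plus_deg p hp) hdeg, hfact⟩

end Boundary

end Stmt4Aux

/-- Lemma: an endomorphism of a minimal complex which is `I`-homotopic to the identity
is an isomorphism. -/
theorem stmt4 (E : EZCat A) (M : PshModel A) (Iv : PshInterval M)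
    {X : Psh A} (hX : MinimalComplex M Iv X) (f : X ⟶ X)
    (h : Iv.I ⨯ X ⟶ X) (h0 : Iv.ev Iv.i0 h = 𝟙 X) (h1 : Iv.ev Iv.i1 h = f) :
    IsIso f := by
  classical
  have fibX : M.Fib (terminal.from X) := hX.1
  have keyInj : ∀ (n : ℕ) (b : A), E.deg b < n → Function.Injective (f.app (op b)) := by
    intro n
    induction n with
    | zero => intro b hb; exact absurd hb (Nat.not_lt_zero _)
    | succ n ih =>
      intro b hb x0 y0 hxy
      have hf : yonedaEquiv.symm x0 ≫ f = yonedaEquiv.symm y0 ≫ f := by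
        apply yonedaEquiv.injective
        rw [CategoryTheory.yonedaEquiv_comp, CategoryTheory.yonedaEquiv_comp,
          Equiv.apply_symm_apply, Equiv.apply_symm_apply, hxy]
      set x : yoneda.obj b ⟶ X := yonedaEquiv.symm x0 with hxdef
      set y : yoneda.obj b ⟶ X := yonedaEquiv.symm y0 with hydef
      have hbd : sectionBoundary x = sectionBoundary y := by
        ext U gg
        show x.app U gg.1 = y.app U gg.1
        obtain ⟨d, m, p, hp, hdeg, hfact⟩ := Stmt4Aux.boundary_factor E gg.1 gg.2
        have hxv : x.app U gg.1 = X.map m.op (x.app (op d) p) := by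
          rw [← hfact]
          exact NatTrans.naturality_apply x m.op p
        have hyv : y.app U gg.1 = X.map m.op (y.app (op d) p) := by
          rw [← hfact]
          exact NatTrans.naturality_apply y m.op p
        have hstep : x.app (op d) p = y.app (op d) p := by
          apply ih d (lt_of_lt_of_le hdeg (Nat.lt_succ_iff.1 hb))
          show f.app (op d) (x.app (op d) p) = f.app (op d) (y.app (op d) p)
          have e1 : f.app (op d) (x.app (op d) p) = (x ≫ f).app (op d) p := rfl
          have e2 : f.app (op d) (y.app (op d) p) = (y ≫ f).app (op d) p := rfl
          rw [e1, e2, hf]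
        rw [hxv, hyv, hstep]
      set kx := prod.map (𝟙 Iv.I) x ≫ h with hkx
      set ky := prod.map (𝟙 Iv.I) y ≫ h with hky
      have hkx0 : Iv.ev Iv.i0 kx = x := by
        rw [hkx, Stmt4Aux.ev_natural, h0, Category.comp_id]
      have hkx1 : Iv.ev Iv.i1 kx = x ≫ f := by
        rw [hkx, Stmt4Aux.ev_natural, h1]
      have hky0 : Iv.ev Iv.i0 ky = y := by
        rw [hky, Stmt4Aux.ev_natural, h0, Category.comp_id]
      have hky1 : Iv.ev Iv.i1 ky = y ≫ f := by
        rw [hky, Stmt4Aux.ev_natural, h1]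
      have hcylk : prod.map (𝟙 Iv.I) (pshBoundary (yoneda.obj b)).ι ≫ kx
          = prod.map (𝟙 Iv.I) (pshBoundary (yoneda.obj b)).ι ≫ ky := by
        rw [hkx, hky, ← Category.assoc, ← Category.assoc, prod.map_map, prod.map_map,
          Category.comp_id]
        have hbd' : (pshBoundary (yoneda.obj b)).ι ≫ x = (pshBoundary (yoneda.obj b)).ι ≫ y :=
          hbd
        rw [hbd']
      have hev1 : Iv.ev Iv.i1 kx = Iv.ev Iv.i1 ky := by rw [hkx1, hky1, hf]
      obtain ⟨G, hGc, hG0, hG1⟩ := Stmt4Aux.square_lemma Iv (pshBoundary (yoneda.obj b))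
        kx ky Iv.i1 fibX hcylk hev1 Iv.i0
      have hxyeq : x = y := by
        apply hX.2 b
        refine ⟨hbd, G, ⟨_, hGc⟩, ?_, ?_⟩
        · rw [hG0, hkx0]
        · rw [hG1, hky0]
      have : yonedaEquiv.symm x0 = yonedaEquiv.symm y0 := by
        rw [← hxdef, ← hydef]; exact hxyeq
      exact yonedaEquiv.symm.injective this
  have keyInjAll : ∀ (U : Aᵒᵖ), Function.Injective (f.app U) := fun U =>
    keyInj (E.deg U.unop + 1) U.unop (Nat.lt_succ_self _)
  have keySurj : ∀ (n : ℕ) (b : A), E.deg b < n → Function.Surjective (f.app (op b)) := by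
    intro n
    induction n with
    | zero => intro b hb; exact absurd hb (Nat.not_lt_zero _)
    | succ n ih =>
      intro b hb y0
      set y : yoneda.obj b ⟶ X := yonedaEquiv.symm y0 with hydef
      have hex : ∀ (U : Aᵒᵖ) (gg : (pshBoundary (yoneda.obj b)).toFunctor.obj U),
          ∃ ξ : X.obj U, f.app U ξ = y.app U gg.1 := by
        intro U gg
        obtain ⟨d, m, p, hp, hdeg, hfact⟩ := Stmt4Aux.boundary_factor E gg.1 gg.2
        obtain ⟨ξd, hξd⟩ := ih d (lt_of_lt_of_le hdeg (Nat.lt_succ_iff.1 hb)) (y.app (op d) p)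
        refine ⟨X.map m.op ξd, ?_⟩
        have hnat : f.app U (X.map m.op ξd) = X.map m.op (f.app (op d) ξd) :=
          NatTrans.naturality_apply f m.op ξd
        rw [hnat, hξd, ← FunctorToTypes.naturality]
        show y.app U (m ≫ p) = y.app U gg.1
        rw [hfact]
      set xb : (pshBoundary (yoneda.obj b)).toFunctor ⟶ X :=
        { app := fun U => TypeCat.ofHom fun gg => (hex U gg).choose
          naturality := by
            intro U V' i
            ext gg
            apply keyInjAll V'
            show f.app V' ((hex V' _).choose) = f.app V' (X.map i ((hex U gg).choose))
            rw [(hex V' _).choose_spec]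
            have hn : f.app V' (X.map i (hex U gg).choose)
                = X.map i (f.app U (hex U gg).choose) :=
              NatTrans.naturality_apply f i _
            rw [hn, (hex U gg).choose_spec]
            exact NatTrans.naturality_apply y i gg.1 } with hxbdef
      have hxbf : xb ≫ f = sectionBoundary y := by
        rw [hxbdef]
        ext U gg
        exact (hex U gg).choose_spec
      set β := prod.map (𝟙 Iv.I) xb ≫ h with hβ
      have hβ1 : Iv.ev Iv.i1 β = (pshBoundary (yoneda.obj b)).ι ≫ y := by
        rw [hβ, Stmt4Aux.ev_natural, h1, hxbf]
        rfl
      obtain ⟨Hh, hHev, hHcyl⟩ := Stmt4Aux.ext1 Iv Iv.i1 fibX (pshBoundary (yoneda.obj b))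
        y β hβ1
      set x := Iv.ev Iv.i0 Hh with hx
      set kx := prod.map (𝟙 Iv.I) x ≫ h with hkx
      have hkx0 : Iv.ev Iv.i0 kx = x := by
        rw [hkx, Stmt4Aux.ev_natural, h0, Category.comp_id]
      have hkx1 : Iv.ev Iv.i1 kx = x ≫ f := by
        rw [hkx, Stmt4Aux.ev_natural, h1]
      have hbx : (pshBoundary (yoneda.obj b)).ι ≫ x = xb := by
        rw [hx, ← Stmt4Aux.ev_natural Iv Iv.i0 ((pshBoundary (yoneda.obj b)).ι) Hh, hHcyl,
          hβ, Stmt4Aux.ev_natural, h0, Category.comp_id]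
      have hcyl : prod.map (𝟙 Iv.I) (pshBoundary (yoneda.obj b)).ι ≫ kx
          = prod.map (𝟙 Iv.I) (pshBoundary (yoneda.obj b)).ι ≫ Hh := by
        rw [hkx, ← Category.assoc, prod.map_map, Category.comp_id, hbx, ← hβ, ← hHcyl]
      have hev0 : Iv.ev Iv.i0 kx = Iv.ev Iv.i0 Hh := by rw [hkx0, hx]
      obtain ⟨G, hGc, hG0, hG1⟩ := Stmt4Aux.square_lemma Iv (pshBoundary (yoneda.obj b))
        kx Hh Iv.i0 fibX hcyl hev0 Iv.i1
      have hbd2 : sectionBoundary (x ≫ f) = sectionBoundary y := by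
        show (pshBoundary (yoneda.obj b)).ι ≫ x ≫ f = sectionBoundary y
        rw [← Category.assoc, hbx, hxbf]
      have hxy : x ≫ f = y := by
        apply hX.2 b
        refine ⟨hbd2, G, ⟨_, hGc⟩, ?_, ?_⟩
        · rw [hG0, hkx1]
        · rw [hG1, hHev]
      refine ⟨yonedaEquiv x, ?_⟩
      have hc : f.app (op b) (yonedaEquiv x) = yonedaEquiv (x ≫ f) :=
        (CategoryTheory.yonedaEquiv_comp x f).symm
      rw [hc, hxy, hydef]
      exact Equiv.apply_symm_apply _ _
  have keySurjAll : ∀ (U : Aᵒᵖ), Function.Surjective (f.app U) := fun U =>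
    keySurj (E.deg U.unop + 1) U.unop (Nat.lt_succ_self _)
  have : ∀ (U : Aᵒᵖ), IsIso (f.app U) := fun U =>
    (isIso_iff_bijective _).2 ⟨keyInjAll U, keySurjAll U⟩
  exact NatIso.isIso_of_isIso_app f
end

section
/- The class of minimal fibrations in presheaves over an Eilenberg-Zilber category is stable under pullback: if p' : X' → Y' is a minimal fibration and v : Y → Y' any map, then the induced map Y ×_{Y'} X' → Y is a minimal fibration. -/
open CategoryTheory CategoryTheory.Limits CategoryTheory.GrothendieckTopology Opposite

universe u

variable (A : Type u) [SmallCategory A]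

variable {A}

/-- Proposition: minimal fibrations are stable under pullback. -/
theorem stmt7 (E : EZCat A) (M : PshModel A) (Iv : PshInterval M)
    {X' Y Y' : Psh A} (p' : X' ⟶ Y') (hp' : MinFib M Iv p') (v : Y ⟶ Y') :
    MinFib M Iv (pullback.fst v p') := by
  obtain ⟨hfib, hmin⟩ := hp'
  refine ⟨M.fib_pullback v p' hfib, ?_⟩
  rintro a x y ⟨hxy, hbd, h, ⟨k, hk⟩, hhp, h0, h1⟩
  have hsnd : x ≫ pullback.snd v p' = y ≫ pullback.snd v p' := by
    apply hmin a
    refine ⟨?_, ?_, h ≫ pullback.snd v p', ⟨k ≫ pullback.snd v p', ?_⟩, ?_, ?_, ?_⟩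
    · rw [Category.assoc, Category.assoc, ← pullback.condition, ← Category.assoc,
        ← Category.assoc, hxy]
    · unfold sectionBoundary at hbd ⊢
      rw [← Category.assoc, ← Category.assoc]
      exact congrArg (· ≫ pullback.snd v p') hbd
    · rw [← Category.assoc, hk, Category.assoc]
    · rw [← Category.assoc, Category.assoc, ← pullback.condition, ← Category.assoc, hhp]
      simp [pullback.condition]
    · unfold PshInterval.ev at h0 ⊢
      rw [← Category.assoc, h0]
    · unfold PshInterval.ev at h1 ⊢
      rw [← Category.assoc, h1]
  exact pullback.hom_ext hxy hsnd
end

section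
/- In a presheaf topos, for any monomorphism v : Y → Y' and any trivial fibration p : X → Y, there exists a trivial fibration p' : X' → Y' and a pullback square exhibiting p as the pullback of p' along v. Indeed one may take p' = v_*(p), the pushforward along v, using that v^* v_* ≅ id and that v_* preserves trivial fibrations. -/
open CategoryTheory CategoryTheory.Limits CategoryTheory.GrothendieckTopology Opposite

universe u

variable (A : Type u) [SmallCategory A]

variable {A}

namespace PushFwd

variable {X Y Y' : Psh A} (v : Y ⟶ Y') (p : X ⟶ Y)

lemma pushAux {a : A} (y' : Y'.obj (op a)) {b c : A} (f : b ⟶ a) (g : c ⟶ b)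
    (y : Y.obj (op b)) (h : v.app (op b) y = Y'.map f.op y') :
    v.app (op c) (Y.map g.op y) = Y'.map (g ≫ f).op y' := by
  rw [FunctorToTypes.naturality, h, ← FunctorToTypes.map_comp_apply]
  rfl

/-- An element of the pushforward `v_* X` over `a`. -/
structure PushEl (a : A) : Type u where
  y' : Y'.obj (op a)
  lift : ∀ (b : A) (f : b ⟶ a) (y : Y.obj (op b)),
    v.app (op b) y = Y'.map f.op y' → X.obj (op b)
  p_lift : ∀ (b : A) (f : b ⟶ a) (y : Y.obj (op b))
    (h : v.app (op b) y = Y'.map f.op y'), p.app (op b) (lift b f y h) = y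
  lift_nat : ∀ (b c : A) (f : b ⟶ a) (g : c ⟶ b) (y : Y.obj (op b))
    (h : v.app (op b) y = Y'.map f.op y'),
    X.map g.op (lift b f y h) = lift c (g ≫ f) (Y.map g.op y) (pushAux v y' f g y h)

variable {v p}

lemma PushEl.lift_congr {a : A} {s t : PushEl v p a} (hst : s = t) {b : A}
    {f f' : b ⟶ a} (hf : f = f') {y y₂ : Y.obj (op b)} (hy : y = y₂)
    (h : v.app (op b) y = Y'.map f.op s.y')
    (h' : v.app (op b) y₂ = Y'.map f'.op t.y') :
    s.lift b f y h = t.lift b f' y₂ h' := by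
  subst hst; subst hf; subst hy; rfl

lemma PushEl.ext' {a : A} {s t : PushEl v p a} (h1 : s.y' = t.y')
    (h2 : ∀ (b : A) (f : b ⟶ a) (y : Y.obj (op b)) h h',
      s.lift b f y h = t.lift b f y h') : s = t := by
  obtain ⟨y1, l1, pl1, ln1⟩ := s
  obtain ⟨y2, l2, pl2, ln2⟩ := t
  dsimp at h1
  subst h1
  have : l1 = l2 := by
    funext b f y h
    exact h2 b f y h h
  subst this
  rfl

variable (v p)

/-- The pushforward presheaf `v_* X`. -/
def pushObj : Psh A where
  obj a := PushEl v p a.unop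
  map {a a'} m := TypeCat.ofHom fun s =>
    { y' := Y'.map m s.y'
      lift := fun b f y h => s.lift b (f ≫ m.unop) y
        (by rw [h, ← FunctorToTypes.map_comp_apply]; rfl)
      p_lift := fun b f y h => s.p_lift ..
      lift_nat := fun b c f g y h => by
        rw [s.lift_nat]
        exact PushEl.lift_congr rfl (by simp) rfl _ _ }
  map_id a := by
    refine ConcreteCategory.hom_ext _ _ fun s => ?_
    apply PushEl.ext'
    · exact FunctorToTypes.map_id_apply _ _
    · intro b f y h h'
      apply PushEl.lift_congr rfl (Category.comp_id f) rfl
  map_comp {a a' a''} m m' := by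
    refine ConcreteCategory.hom_ext _ _ fun s => ?_
    apply PushEl.ext'
    · exact FunctorToTypes.map_comp_apply _ _ _ _
    · intro b f y h h'
      apply PushEl.lift_congr rfl
        (show f ≫ (m ≫ m').unop = (f ≫ m'.unop) ≫ m.unop by simp) rfl

section
variable {v p}

lemma PushEl.lift_eq {a : A} {s t : PushEl v p a} (hst : s = t) {b : A}
    {f f' : b ⟶ a} (hf : f = f') {y y₂ : Y.obj (op b)} (hy : y = y₂)
    (h : v.app (op b) y = Y'.map f.op s.y') :
    s.lift b f y h = t.lift b f' y₂ (by rw [← hst, ← hf, ← hy]; exact h) :=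
  PushEl.lift_congr hst hf hy _ _

lemma pushMap_lift {a a' : Aᵒᵖ} (m : a ⟶ a') (s : PushEl v p (unop a)) (b : A)
    (f : b ⟶ unop a') (y : Y.obj (op b))
    (h : v.app (op b) y = Y'.map f.op (((pushObj v p).map m s).y')) :
    ((pushObj v p).map m s).lift b f y h
      = s.lift b (f ≫ m.unop) y
          (by
            rw [h]
            show Y'.map f.op (Y'.map m s.y') = _
            rw [← FunctorToTypes.map_comp_apply]
            rfl) := rfl

end

/-- The projection `v_* X ⟶ Y'`. -/
def pushP : pushObj v p ⟶ Y' where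
  app a := TypeCat.ofHom fun s => s.y'

/-- The unit `X ⟶ v_* X`. -/
def pushU (hv : ∀ (a : Aᵒᵖ), Function.Injective (v.app a)) : X ⟶ pushObj v p where
  app a := TypeCat.ofHom fun x =>
    { y' := v.app a (p.app a x)
      lift := fun b f y _ => X.map f.op x
      p_lift := fun b f y h => by
        have hy : y = Y.map f.op (p.app a x) := by
          apply hv
          rw [h, ← FunctorToTypes.naturality]
        dsimp only
        rw [FunctorToTypes.naturality, ← hy]
      lift_nat := fun b c f g y h => by
        rw [← FunctorToTypes.map_comp_apply]; rfl }
  naturality {a a'} m := by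
    refine ConcreteCategory.hom_ext _ _ fun x => ?_
    apply PushEl.ext'
    · show v.app a' (p.app a' (X.map m x)) = Y'.map m (v.app a (p.app a x))
      rw [NatTrans.naturality_apply p, NatTrans.naturality_apply v]
    · intro b f y h h'
      exact (FunctorToTypes.map_comp_apply X m f.op x).symm

/-- The pullback presheaf of `g : L ⟶ Y'` along `v`. -/
def pbObj {L : Psh A} (g : L ⟶ Y') : Psh A where
  obj a := {q : L.obj a × Y.obj a // g.app a q.1 = v.app a q.2}
  map {a a'} m := TypeCat.ofHom fun q => ⟨(L.map m q.1.1, Y.map m q.1.2), by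
    dsimp only
    rw [NatTrans.naturality_apply g, NatTrans.naturality_apply v, q.2]⟩
  map_id a := by
    refine ConcreteCategory.hom_ext _ _ fun q => ?_
    exact Subtype.ext (Prod.ext (FunctorToTypes.map_id_apply _ _)
      (FunctorToTypes.map_id_apply _ _))
  map_comp m m' := by
    refine ConcreteCategory.hom_ext _ _ fun q => ?_
    exact Subtype.ext (Prod.ext (FunctorToTypes.map_comp_apply _ _ _ _)
      (FunctorToTypes.map_comp_apply _ _ _ _))

/-- projection from the pullback to `Y`. -/
def pbSnd {L : Psh A} (g : L ⟶ Y') : pbObj v g ⟶ Y where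
  app a := TypeCat.ofHom fun q => q.1.2

lemma push_rlp (hv : ∀ (a : Aᵒᵖ), Function.Injective (v.app a))
    (hp : ∀ {K L : Psh A} (i : K ⟶ L), Mono i → HasLiftingProperty i p)
    {K L : Psh A} (i : K ⟶ L) (hi : Mono i) :
    HasLiftingProperty i (pushP v p) := by
  constructor
  intro f g sq
  -- the two pullbacks along `v` and the comparison map
  let PK := pbObj v (i ≫ g)
  let PL := pbObj v g
  let i' : PK ⟶ PL :=
    { app := fun a => TypeCat.ofHom fun q => ⟨(i.app a q.1.1, q.1.2), q.2⟩
      naturality := fun a a' m => by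
        refine ConcreteCategory.hom_ext _ _ fun q => ?_
        exact Subtype.ext (Prod.ext (by have := NatTrans.naturality_apply i m q.1.1; exact this) rfl) }
  have hi' : Mono i' := by
    rw [NatTrans.mono_iff_mono_app]
    intro a
    rw [CategoryTheory.mono_iff_injective]
    intro q q' hqq
    apply Subtype.ext
    apply Prod.ext
    · exact (CategoryTheory.mono_iff_injective _).1
        (((NatTrans.mono_iff_mono_app i).1 hi) a)
        (congrArg (fun z => (Subtype.val z).1) hqq)
    · exact congrArg (fun z => (Subtype.val z).2) hqq
  have hfy : ∀ (a : Aᵒᵖ) (k : K.obj a), (f.app a k).y' = g.app a (i.app a k) := by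
    intro a k
    exact ConcreteCategory.congr_hom (NatTrans.congr_app sq.w a) k
  have hTop : ∀ (a : Aᵒᵖ) (q : PK.obj a),
      v.app (op (unop a)) q.1.2 = Y'.map (𝟙 (unop a)).op (f.app a q.1.1).y' := by
    intro a q
    rw [show Y'.map (𝟙 (unop a)).op (f.app a q.1.1).y' = (f.app a q.1.1).y' from
      FunctorToTypes.map_id_apply _ _, hfy a q.1.1]
    exact q.2.symm
  let topApp : ∀ (a : Aᵒᵖ), PK.obj a → X.obj a :=
    fun a q => (f.app a q.1.1).lift (unop a) (𝟙 (unop a)) q.1.2 (hTop a q)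
  let top : PK ⟶ X :=
    { app := fun a => TypeCat.ofHom (topApp a)
      naturality := fun a a' m => by
        refine ConcreteCategory.hom_ext _ _ fun q => ?_
        have hs : f.app a' (K.map m q.1.1) = (pushObj v p).map m (f.app a q.1.1) :=
          NatTrans.naturality_apply f m q.1.1
        show (f.app a' (K.map m q.1.1)).lift (unop a') (𝟙 (unop a'))
            (Y.map m q.1.2) (hTop a' (PK.map m q))
          = X.map m.unop.op ((f.app a q.1.1).lift (unop a) (𝟙 (unop a)) q.1.2 (hTop a q))
        erw [PushEl.lift_eq hs rfl rfl, pushMap_lift, (f.app a q.1.1).lift_nat,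
          PushEl.lift_eq (rfl : f.app a q.1.1 = f.app a q.1.1)
            (show 𝟙 (unop a') ≫ m.unop = m.unop ≫ 𝟙 (unop a) by simp) rfl]
        rfl }
  have sq' : CommSq top i' p (pbSnd v g) := by
    constructor
    apply NatTrans.ext
    funext a
    refine ConcreteCategory.hom_ext _ _ fun q => ?_
    exact (f.app a q.1.1).p_lift _ _ _ _
  have hlp := hp i' hi'
  obtain ⟨ℓ, hl1, hl2⟩ := (hlp.sq_hasLift sq').exists_lift.some
  -- the filler
  have hcond : ∀ (a : Aᵒᵖ) (l : L.obj a) (b : A) (f₀ : b ⟶ unop a) (y : Y.obj (op b)),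
      v.app (op b) y = Y'.map f₀.op (g.app a l) →
      g.app (op b) (L.map f₀.op l) = v.app (op b) y := by
    intro a l b f₀ y h
    rw [NatTrans.naturality_apply g, ← h]
  let Fapp : ∀ (a : Aᵒᵖ), L.obj a → PushEl v p (unop a) := fun a l =>
    { y' := g.app a l
      lift := fun b f₀ y h => ℓ.app (op b) ⟨(L.map f₀.op l, y), hcond a l b f₀ y h⟩
      p_lift := fun b f₀ y h =>
        ConcreteCategory.congr_hom (NatTrans.congr_app hl2 (op b))
          ⟨(L.map f₀.op l, y), hcond a l b f₀ y h⟩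
      lift_nat := fun b c f₀ g₀ y h => by
        erw [← NatTrans.naturality_apply ℓ g₀.op]
        exact congrArg (ℓ.app (op c)) (Subtype.ext (Prod.ext
          (by exact (FunctorToTypes.map_comp_apply L f₀.op g₀.op l).symm) rfl)) }
  let F : L ⟶ pushObj v p :=
    { app := fun a => TypeCat.ofHom (Fapp a)
      naturality := fun a a' m => by
        refine ConcreteCategory.hom_ext _ _ fun l => ?_
        apply PushEl.ext'
        · exact NatTrans.naturality_apply g m l
        · intro b f₀ y h h'
          show (Fapp a' (L.map m l)).lift b f₀ y h
            = ((pushObj v p).map m (Fapp a l)).lift b f₀ y h'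
          erw [pushMap_lift]
          exact congrArg (ℓ.app (op b)) (Subtype.ext (Prod.ext
            (by exact (FunctorToTypes.map_comp_apply L m f₀.op l).symm) rfl)) }
  refine ⟨⟨⟨F, ?_, ?_⟩⟩⟩
  · -- i ≫ F = f
    apply NatTrans.ext
    funext a
    refine ConcreteCategory.hom_ext _ _ fun k => ?_
    apply PushEl.ext'
    · exact (hfy a k).symm
    · intro b f₀ y h h'
      show ℓ.app (op b) ⟨(L.map f₀.op (i.app a k), y), hcond a (i.app a k) b f₀ y h⟩
        = (f.app a k).lift b f₀ y h'
      have c2 : (i ≫ g).app (op b) (K.map f₀.op k) = v.app (op b) y := by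
        show g.app (op b) (i.app (op b) (K.map f₀.op k)) = v.app (op b) y
        rw [NatTrans.naturality_apply i f₀.op k,
          NatTrans.naturality_apply g f₀.op, ← hfy a k, ← h']
      have e1 : ℓ.app (op b) ⟨(L.map f₀.op (i.app a k), y), hcond a (i.app a k) b f₀ y h⟩
          = ℓ.app (op b) (i'.app (op b) ⟨(K.map f₀.op k, y), c2⟩) :=
        congrArg (ℓ.app (op b)) (Subtype.ext (Prod.ext
          (NatTrans.naturality_apply i f₀.op k).symm rfl))
      rw [e1, show ℓ.app (op b) (i'.app (op b) ⟨(K.map f₀.op k, y), c2⟩)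
          = topApp (op b) ⟨(K.map f₀.op k, y), c2⟩ from
            ConcreteCategory.congr_hom (NatTrans.congr_app hl1 (op b)) ⟨(K.map f₀.op k, y), c2⟩]
      have hs : f.app (op b) (K.map f₀.op k) = (pushObj v p).map f₀.op (f.app a k) :=
        NatTrans.naturality_apply f f₀.op k
      show (f.app (op b) (K.map f₀.op k)).lift b (𝟙 b) y (hTop (op b) ⟨(K.map f₀.op k, y), c2⟩)
        = (f.app a k).lift b f₀ y h'
      erw [PushEl.lift_eq hs rfl rfl, pushMap_lift,
        PushEl.lift_eq (rfl : f.app a k = f.app a k)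
          (show 𝟙 b ≫ (f₀.op).unop = f₀ by simp) rfl]
  · -- F ≫ pushP = g
    apply NatTrans.ext
    funext a
    refine ConcreteCategory.hom_ext _ _ fun l => ?_
    rfl

lemma push_isPullback (hv : ∀ (a : Aᵒᵖ), Function.Injective (v.app a)) :
    IsPullback (pushU v p hv) p (pushP v p) v := by
  have w : pushU v p hv ≫ pushP v p = p ≫ v := rfl
  have hsc : ∀ (s : PullbackCone (pushP v p) v) (a : Aᵒᵖ) (z : s.pt.obj a),
      (s.fst.app a z).y' = v.app a (s.snd.app a z) := fun s a z =>
    by have := ConcreteCategory.congr_hom (NatTrans.congr_app s.condition a) z; exact this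
  have hW : ∀ (s : PullbackCone (pushP v p) v) (a : Aᵒᵖ) (z : s.pt.obj a),
      v.app (op (unop a)) (s.snd.app a z)
        = Y'.map (𝟙 (unop a)).op (s.fst.app a z).y' := by
    intro s a z
    rw [show Y'.map (𝟙 (unop a)).op (s.fst.app a z).y' = (s.fst.app a z).y' from
      FunctorToTypes.map_id_apply _ _, hsc s a z]
  let mkLift : ∀ s : PullbackCone (pushP v p) v, s.pt ⟶ X := fun s =>
    { app := fun a => TypeCat.ofHom fun z => (s.fst.app a z).lift (unop a) (𝟙 (unop a)) (s.snd.app a z) (hW s a z)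
      naturality := fun a a' m => by
        refine ConcreteCategory.hom_ext _ _ fun z => ?_
        have hs : s.fst.app a' (s.pt.map m z) = (pushObj v p).map m (s.fst.app a z) :=
          NatTrans.naturality_apply s.fst m z
        have hy : s.snd.app a' (s.pt.map m z) = Y.map m (s.snd.app a z) :=
          NatTrans.naturality_apply s.snd m z
        show (s.fst.app a' (s.pt.map m z)).lift (unop a') (𝟙 (unop a'))
            (s.snd.app a' (s.pt.map m z)) (hW s a' (s.pt.map m z))
          = X.map m.unop.op ((s.fst.app a z).lift (unop a) (𝟙 (unop a))
              (s.snd.app a z) (hW s a z))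
        erw [PushEl.lift_eq hs rfl hy, pushMap_lift, (s.fst.app a z).lift_nat,
          PushEl.lift_eq (rfl : s.fst.app a z = s.fst.app a z)
            (show 𝟙 (unop a') ≫ m.unop = m.unop ≫ 𝟙 (unop a) by simp) rfl]
        rfl }
  refine IsPullback.of_isLimit' ⟨w⟩ (PullbackCone.IsLimit.mk w mkLift ?_ ?_ ?_)
  · -- fac_left : mkLift s ≫ pushU = s.fst
    intro s
    apply NatTrans.ext
    funext a
    refine ConcreteCategory.hom_ext _ _ fun z => ?_
    apply PushEl.ext'
    · show v.app a (p.app a ((mkLift s).app a z)) = (s.fst.app a z).y'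
      rw [show p.app a ((mkLift s).app a z) = s.snd.app a z from
        (s.fst.app a z).p_lift _ _ _ _, ← hsc s a z]
    · intro b f₀ y h h'
      have hy : Y.map f₀.op (s.snd.app a z) = y := by
        apply hv
        rw [NatTrans.naturality_apply v f₀.op, ← hsc s a z, ← h']
      show X.map f₀.op ((s.fst.app a z).lift (unop a) (𝟙 (unop a))
          (s.snd.app a z) (hW s a z)) = (s.fst.app a z).lift b f₀ y h'
      rw [(s.fst.app a z).lift_nat,
        PushEl.lift_eq (rfl : s.fst.app a z = s.fst.app a z)
          (show f₀ ≫ 𝟙 (unop a) = f₀ by simp) hy]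
  · -- fac_right : mkLift s ≫ p = s.snd
    intro s
    apply NatTrans.ext
    funext a
    refine ConcreteCategory.hom_ext _ _ fun z => ?_
    exact (s.fst.app a z).p_lift _ _ _ _
  · -- uniqueness
    intro s m hm1 hm2
    apply NatTrans.ext
    funext a
    refine ConcreteCategory.hom_ext _ _ fun z => ?_
    have e1 : (pushU v p hv).app a (m.app a z) = s.fst.app a z :=
      ConcreteCategory.congr_hom (NatTrans.congr_app hm1 a) z
    have e2 : p.app a (m.app a z) = s.snd.app a z :=
      ConcreteCategory.congr_hom (NatTrans.congr_app hm2 a) z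
    have key : m.app a z = ((pushU v p hv).app a (m.app a z)).lift (unop a) (𝟙 (unop a))
        (p.app a (m.app a z)) ((FunctorToTypes.map_id_apply Y' _).symm) := by
      show m.app a z = X.map (𝟙 (unop a)).op (m.app a z)
      exact (FunctorToTypes.map_id_apply X _).symm
    erw [key, PushEl.lift_eq e1 rfl e2]
    rfl

end PushFwd


/-- Lemma: in a presheaf topos, any trivial fibration (map with the right lifting
property with respect to all monomorphisms) extends along any monomorphism of its
codomain: it is the pullback of a trivial fibration over the bigger base. -/
theorem stmt10 {X Y Y' : Psh A} (v : Y ⟶ Y') (hv : Mono v) (p : X ⟶ Y)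
    (hp : ∀ {K L : Psh A} (i : K ⟶ L), Mono i → HasLiftingProperty i p) :
    ∃ (X' : Psh A) (p' : X' ⟶ Y') (u : X ⟶ X'),
      (∀ {K L : Psh A} (i : K ⟶ L), Mono i → HasLiftingProperty i p') ∧
      IsPullback u p p' v := by
  have hv' : ∀ (a : Aᵒᵖ), Function.Injective (v.app a) := by
    intro a
    rw [← CategoryTheory.mono_iff_injective]
    exact (NatTrans.mono_iff_mono_app v).1 hv a
  exact ⟨PushFwd.pushObj v p, PushFwd.pushP v p, PushFwd.pushU v p hv',
    fun i hi => PushFwd.push_rlp v p hv' hp i hi, PushFwd.push_isPullback v p hv'⟩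
end

section
/- If A is an elegant Reedy category, any class C of presheaves on A that is saturated by monomorphisms and contains all representable presheaves contains all presheaves on A. -/
open CategoryTheory CategoryTheory.Limits CategoryTheory.GrothendieckTopology Opposite

universe u

variable (A : Type u) [SmallCategory A]

variable {A}

/-- A class of presheaves saturated by monomorphisms. -/
structure SaturatedByMono (C : Set (Psh A)) : Prop where
  empty : (⊥_ (Psh A)) ∈ C
  pushout : ∀ {X X' Y Y' : Psh A} (u : X ⟶ X') (i : X ⟶ Y) (i' : X' ⟶ Y') (v : Y ⟶ Y'),
    Mono i → IsPushout u i i' v → X ∈ C → X' ∈ C → Y ∈ C → Y' ∈ C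
  chain : ∀ (α : Type u) [inst : LinearOrder α] [inst' : IsWellOrder α (· < ·)]
    (F : α ⥤ Psh A) (c : Cocone F), IsColimit c →
    (∀ (i j : α) (h : i ⟶ j), Mono (F.map h)) → (∀ i, F.obj i ∈ C) → c.pt ∈ C
  retract : ∀ {X Y : Psh A} (s : X ⟶ Y) (r : Y ⟶ X), s ≫ r = 𝟙 X → Y ∈ C → X ∈ C

namespace Aux13


variable (E : ElegantReedy A) (X : Psh A)

lemma map_op_comp {c b d : A} (m : c ⟶ b) (q : b ⟶ d) (w : X.obj (op d)) :
    X.map (m ≫ q).op w = X.map m.op (X.map q.op w) := by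
  rw [op_comp, FunctorToTypes.map_comp_apply]

lemma map_op_id {c : A} (w : X.obj (op c)) : X.map (𝟙 c).op w = w := by
  simp

lemma minus_eqToHom {a b : A} (h : a = b) : E.minus (eqToHom h) := by
  subst h; simpa using E.minus_id a

lemma plus_eqToHom {a b : A} (h : a = b) : E.plus (eqToHom h) := by
  subst h; simpa using E.plus_id a

/-- The type of cells of `X`: nondegenerate sections. -/
def Cell : Type u := Σ a : A, {x : X.obj (op a) // E.toReedyStruct.Nondegenerate x}

lemma exists_core (c : A) (z : X.obj (op c)) :
    ∃ (j : Cell E X) (f : c ⟶ j.1), E.minus f ∧ X.map f.op j.2.1 = z := by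
  obtain ⟨b, f, y, hf, hy, he⟩ := E.ez_exists X c z
  exact ⟨⟨b, y, hy⟩, f, hf, he⟩

/-- The core (nondegenerate "interior") of a section. -/
noncomputable def core (c : A) (z : X.obj (op c)) : Cell E X :=
  (exists_core E X c z).choose

noncomputable def coreHom (c : A) (z : X.obj (op c)) : c ⟶ (core E X c z).1 :=
  (exists_core E X c z).choose_spec.choose

lemma core_minus (c : A) (z : X.obj (op c)) : E.minus (coreHom E X c z) :=
  (exists_core E X c z).choose_spec.choose_spec.1

lemma core_eq (c : A) (z : X.obj (op c)) :
    X.map (coreHom E X c z).op (core E X c z).2.1 = z :=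
  (exists_core E X c z).choose_spec.choose_spec.2

lemma core_unique (c : A) (z : X.obj (op c)) (j : Cell E X) (f : c ⟶ j.1)
    (hf : E.minus f) (he : X.map f.op j.2.1 = z) : j = core E X c z := by
  obtain ⟨e, h1, h2⟩ := E.ez_unique X c f (coreHom E X c z) j.2.1 (core E X c z).2.1
    hf (core_minus E X c z) j.2.2 (core E X c z).2.2 (he.trans (core_eq E X c z).symm)
  obtain ⟨b, y, hy⟩ := j
  dsimp at e h2
  subst e
  have : y = (core E X c z).2.1 := by simpa [map_op_id] using h2
  exact congrArg (Sigma.mk _) (Subtype.ext this)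

lemma core_deg_le (c : A) (z : X.obj (op c)) : E.deg (core E X c z).1 ≤ E.deg c :=
  E.minus_deg _ (core_minus E X c z)

lemma core_map_minus {c b : A} (m : c ⟶ b) (hm : E.minus m) (z : X.obj (op b)) :
    core E X c (X.map m.op z) = core E X b z := by
  refine (core_unique E X c (X.map m.op z) (core E X b z)
    (m ≫ coreHom E X b z) (E.minus_comp _ _ hm (core_minus E X b z)) ?_).symm
  rw [map_op_comp, core_eq]

lemma core_self {a : A} (x : X.obj (op a)) (hx : E.toReedyStruct.Nondegenerate x) :
    core E X a x = ⟨a, x, hx⟩ :=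
  (core_unique E X a x ⟨a, x, hx⟩ (𝟙 a) (E.minus_id a) (map_op_id X x)).symm

lemma core_map {c' c : A} (g : c' ⟶ c) (z : X.obj (op c)) :
    core E X c' (X.map g.op z) = core E X c z ∨
      E.deg (core E X c' (X.map g.op z)).1 < E.deg (core E X c z).1 := by
  obtain ⟨e, m, p, hm, hp, hmp⟩ := E.fact (g ≫ coreHom E X c z)
  have key : X.map g.op z = X.map m.op (X.map p.op (core E X c z).2.1) := by
    conv_lhs => rw [← core_eq E X c z, ← map_op_comp, ← hmp, map_op_comp]
  rcases lt_or_eq_of_le (E.plus_deg p hp) with hlt | heq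
  · right
    rw [key, core_map_minus E X m hm]
    exact lt_of_le_of_lt (core_deg_le E X e _) hlt
  · left
    obtain ⟨he, hpe⟩ := E.plus_deg_eq p hp heq
    subst he
    rw [eqToHom_refl] at hpe
    rw [key, hpe, map_op_id, core_map_minus E X m hm,
      core_self E X (core E X c z).2.1 (core E X c z).2.2]
    rfl

/-- The well-order on cells: compare degrees first, then an arbitrary well-ordering. -/
def cellR : Cell E X → Cell E X → Prop := fun i j =>
  E.deg i.1 < E.deg j.1 ∨ (E.deg i.1 = E.deg j.1 ∧ WellOrderingRel i j)

lemma cellR_wf : WellFounded (cellR E X) := by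
  have h := (Nat.lt_wfRel.wf).prod_lex (WellOrderingRel.isWellOrder (α := Cell E X)).wf
  have : Subrelation (cellR E X)
      (InvImage (Prod.Lex (· < ·) WellOrderingRel) (fun i => (E.deg i.1, i))) := by
    rintro i j (h | ⟨h1, h2⟩)
    · exact Prod.Lex.left _ _ h
    · show Prod.Lex _ _ (E.deg i.1, i) (E.deg j.1, j)
      rw [h1]
      exact Prod.Lex.right _ h2
  exact Subrelation.wf this (InvImage.wf _ h)

lemma cellR_trans : ∀ i j k, cellR E X i j → cellR E X j k → cellR E X i k := by
  rintro i j k (h | ⟨h1, h2⟩) (h' | ⟨h1', h2'⟩)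
  · exact Or.inl (h.trans_le (le_of_lt h'))
  · exact Or.inl (h1' ▸ h)
  · exact Or.inl (h1 ▸ h')
  · exact Or.inr ⟨h1.trans h1', _root_.trans h2 h2'⟩

lemma cellR_trich : ∀ i j, cellR E X i j ∨ i = j ∨ cellR E X j i := by
  intro i j
  rcases lt_trichotomy (E.deg i.1) (E.deg j.1) with h | h | h
  · exact Or.inl (Or.inl h)
  · rcases trichotomous_of WellOrderingRel i j with h' | h' | h'
    · exact Or.inl (Or.inr ⟨h, h'⟩)
    · exact Or.inr (Or.inl h')
    · exact Or.inr (Or.inr (Or.inr ⟨h.symm, h'⟩))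
  · exact Or.inr (Or.inr (Or.inl h))

lemma cellR_irrefl : ∀ i, ¬ cellR E X i i := by
  rintro i (h | ⟨h1, h2⟩)
  · exact lt_irrefl _ h
  · exact irrefl_of WellOrderingRel i h2

noncomputable def cellLO : LinearOrder (Cell E X) :=
  letI : IsStrictTotalOrder (Cell E X) (cellR E X) :=
    { trichotomous := fun a b h1 h2 => ((cellR_trich E X a b).resolve_left h1).resolve_right h2
      irrefl := cellR_irrefl E X
      trans := cellR_trans E X }
  @linearOrderOfSTO _ (cellR E X) this (Classical.decRel _)

lemma cellLO_lt_iff (i j : Cell E X) : (cellLO E X).lt i j ↔ cellR E X i j := Iff.rfl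

lemma cellLO_le_iff (i j : Cell E X) : (cellLO E X).le i j ↔ (cellR E X i j ∨ i = j) := by
  letI := cellLO E X
  rw [le_iff_lt_or_eq]
  exact Iff.rfl

/-- Downward closed sets of cells. -/
def DC (D : Set (Cell E X)) : Prop :=
  ∀ i j : Cell E X, cellR E X i j → j ∈ D → i ∈ D

def Dlt (i : Cell E X) : Set (Cell E X) := {k | cellR E X k i}

def Dle (i : Cell E X) : Set (Cell E X) := {k | cellR E X k i ∨ k = i}

lemma dc_lt (i : Cell E X) : DC E X (Dlt E X i) :=
  fun _ _ h hj => cellR_trans E X _ _ _ h hj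

lemma dc_le (i : Cell E X) : DC E X (Dle E X i) := by
  rintro k j h (hj | rfl)
  · exact Or.inl (cellR_trans E X _ _ _ h hj)
  · exact Or.inl h

lemma dc_univ : DC E X Set.univ := fun _ _ _ _ => trivial

lemma dle_subset {i : Cell E X} {D : Set (Cell E X)} (hD : DC E X D) (hi : i ∈ D) :
    Dle E X i ⊆ D := by
  rintro k (hk | rfl)
  · exact hD _ _ hk hi
  · exact hi

/-- The subpresheaf of `X` spanned by a downward-closed set of cells. -/
def SP (D : Set (Cell E X)) (hD : DC E X D) : Subfunctor X where
  obj U := {z | core E X U.unop z ∈ D}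
  map := by
    intro U V g z hz
    rcases core_map E X g.unop z with h | h
    · show core E X V.unop (X.map g z) ∈ D
      rw [show X.map g = X.map g.unop.op from rfl, h]
      exact hz
    · exact hD _ _ (Or.inl h) hz

lemma SP_mono {D D' : Set (Cell E X)} (hD : DC E X D) (hD' : DC E X D') (h : D ⊆ D') :
    SP E X D hD ≤ SP E X D' hD' := fun _ _ hz => h hz

lemma mem_SP_iff {D : Set (Cell E X)} (hD : DC E X D) (c : A) (z : X.obj (op c)) :
    z ∈ (SP E X D hD).obj (op c) ↔ core E X c z ∈ D := Iff.rfl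

lemma dle_mono {i j : Cell E X} (h : cellR E X i j ∨ i = j) :
    Dle E X i ⊆ Dle E X j := by
  rintro k (hk | rfl) <;> rcases h with h | rfl
  · exact Or.inl (cellR_trans E X _ _ _ hk h)
  · exact Or.inl hk
  · exact Or.inl h
  · exact Or.inr rfl

variable {Cs : Set (Psh A)}

lemma chain_mem (hC : SaturatedByMono Cs) (D : Set (Cell E X)) (hD : DC E X D)
    (hstage : ∀ j ∈ D, ((SP E X (Dle E X j) (dc_le E X j)).toFunctor ∈ Cs)) :
    (SP E X D hD).toFunctor ∈ Cs := by
  letI : LinearOrder (Cell E X) := cellLO E X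
  let α : Type u := {j : Cell E X // j ∈ D}
  letI : LinearOrder α := Subtype.instLinearOrder _
  have wfα : WellFounded ((· < ·) : α → α → Prop) := by
    refine Subrelation.wf (r := InvImage (cellR E X) Subtype.val) ?_
      (InvImage.wf _ (cellR_wf E X))
    intro a b h
    exact Subtype.coe_lt_coe.mpr h
  letI : IsWellOrder α (· < ·) :=
    { wf := wfα,
      trichotomous := fun a b h1 h2 => le_antisymm (not_lt.mp h2) (not_lt.mp h1) }
  have hle : ∀ {j j' : α}, j ≤ j' → Dle E X j.1 ⊆ Dle E X j'.1 := by
    intro j j' h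
    exact dle_mono E X ((cellLO_le_iff E X _ _).mp (Subtype.coe_le_coe.mpr h))
  let F : α ⥤ Psh A :=
    { obj := fun j => (SP E X (Dle E X j.1) (dc_le E X j.1)).toFunctor
      map := fun {j j'} h =>
        Subfunctor.homOfLe (SP_mono E X _ _ (hle (leOfHom h)))
      map_id := fun j => rfl
      map_comp := fun _ _ => rfl }
  let cone : Cocone F :=
    { pt := (SP E X D hD).toFunctor
      ι := { app := fun j => Subfunctor.homOfLe (SP_mono E X _ _ (dle_subset E X hD j.2))
             naturality := fun j j' f => by
               simp only [Functor.const_obj_map, Category.comp_id]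
               rfl } }
  have indep1 : ∀ (d : Cocone F) (U : Aᵒᵖ) (z : X.obj U) (j j' : α) (h : j ≤ j')
      (hj : z ∈ (SP E X (Dle E X j.1) (dc_le E X j.1)).obj U)
      (hj' : z ∈ (SP E X (Dle E X j'.1) (dc_le E X j'.1)).obj U),
      (d.ι.app j).app U ⟨z, hj⟩ = (d.ι.app j').app U ⟨z, hj'⟩ := by
    intro d U z j j' h hj hj'
    have hw := d.w (homOfLE h)
    calc (d.ι.app j).app U ⟨z, hj⟩
        = ((F.map (homOfLE h)) ≫ d.ι.app j').app U ⟨z, hj⟩ := by rw [hw]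
      _ = (d.ι.app j').app U ⟨z, hj'⟩ := rfl
  have indep : ∀ (d : Cocone F) (U : Aᵒᵖ) (z : X.obj U) (j j' : α)
      (hj : z ∈ (SP E X (Dle E X j.1) (dc_le E X j.1)).obj U)
      (hj' : z ∈ (SP E X (Dle E X j'.1) (dc_le E X j'.1)).obj U),
      (d.ι.app j).app U ⟨z, hj⟩ = (d.ι.app j').app U ⟨z, hj'⟩ := by
    intro d U z j j' hj hj'
    rcases le_total j j' with h | h
    · exact indep1 d U z j j' h hj hj'
    · exact (indep1 d U z j' j h hj' hj).symm
  have stmem : ∀ (U : Aᵒᵖ) (z : (SP E X D hD).toFunctor.obj U),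
      core E X U.unop z.1 ∈ D := fun U z => z.2
  let desc : ∀ d : Cocone F, (SP E X D hD).toFunctor ⟶ d.pt := fun d =>
    { app := fun U => TypeCat.ofHom fun z => (d.ι.app ⟨core E X U.unop z.1, z.2⟩).app U ⟨z.1, Or.inr rfl⟩
      naturality := by
        intro U V g
        refine ConcreteCategory.hom_ext _ _ (fun z => ?_)
        show (d.ι.app ⟨core E X V.unop (X.map g z.1), _⟩).app V ⟨X.map g z.1, Or.inr rfl⟩
          = d.pt.map g ((d.ι.app ⟨core E X U.unop z.1, z.2⟩).app U ⟨z.1, Or.inr rfl⟩)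
        have hnat := NatTrans.naturality_apply
          (d.ι.app ⟨core E X U.unop z.1, z.2⟩) g ⟨z.1, Or.inr rfl⟩
        refine Eq.trans ?_ hnat
        exact indep d V (X.map g z.1) _ _ _ _ }
  have hcolim : IsColimit cone :=
    { desc := desc
      fac := fun d j => by
        apply NatTrans.ext
        funext U
        refine ConcreteCategory.hom_ext _ _ (fun z => ?_)
        exact indep d U z.1 ⟨core E X U.unop z.1, _⟩ j (Or.inr rfl) z.2
      uniq := fun d m hm => by
        apply NatTrans.ext
        funext U
        refine ConcreteCategory.hom_ext _ _ (fun z => ?_)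
        exact types_congr_hom (congrArg (fun (n : _ ⟶ d.pt) => n.app U)
          (hm ⟨core E X U.unop z.1, z.2⟩)) ⟨z.1, Or.inr rfl⟩ }
  have := hC.chain α F cone hcolim
    (fun i j h => by
      have he : F.map h = Subfunctor.homOfLe (SP_mono E X _ _ (hle (leOfHom h))) := rfl
      rw [he]
      infer_instance)
    (fun j => hstage j.1 j.2)
  exact this

/-- The "boundary" of the cell `i`: maps `f` into `i.1` whose associated section lies
in the part of `X` spanned by earlier cells. -/
def BD (i : Cell E X) : Subfunctor (yoneda.obj i.1) where
  obj U := {f | core E X U.unop (X.map f.op i.2.1) ∈ Dlt E X i}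
  map := by
    intro U V g f hf
    show core E X V.unop (X.map ((yoneda.obj i.1).map g f).op i.2.1) ∈ Dlt E X i
    rw [show ((yoneda.obj i.1).map g f) = g.unop ≫ f from rfl]
    rw [show X.map (g.unop ≫ f).op i.2.1 = X.map g (X.map f.op i.2.1) from
      map_op_comp X g.unop f i.2.1]
    exact (SP E X (Dlt E X i) (dc_lt E X i)).map g hf

lemma cell_cast {j j' : Cell E X} (h : j = j') :
    X.map (eqToHom (congrArg Sigma.fst h)).op j'.2.1 = j.2.1 := by
  subst h
  rw [show (eqToHom (congrArg Sigma.fst (rfl : j = j)) : j.1 ⟶ j.1) = 𝟙 j.1 from rfl,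
    map_op_id]

lemma not_mem_dlt {i : Cell E X} {c : A} (f : c ⟶ i.1)
    (h : core E X c (X.map f.op i.2.1) ∉ Dlt E X i) :
    E.minus f ∧ core E X c (X.map f.op i.2.1) = i := by
  obtain ⟨e, m, p, hm, hp, hmp⟩ := E.fact f
  rcases lt_or_eq_of_le (E.plus_deg p hp) with hlt | heq
  · exfalso
    apply h
    have key : X.map f.op i.2.1 = X.map m.op (X.map p.op i.2.1) := by
      rw [← map_op_comp, hmp]
    rw [key, core_map_minus E X m hm]
    exact Or.inl (lt_of_le_of_lt (core_deg_le E X e _) hlt)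
  · obtain ⟨he, hpe⟩ := E.plus_deg_eq p hp heq
    subst he
    rw [eqToHom_refl] at hpe
    rw [hpe, Category.comp_id] at hmp
    subst hmp
    refine ⟨hm, ?_⟩
    rw [core_map_minus E X m hm, core_self E X i.2.1 i.2.2]
    rfl

lemma inj_minus {i : Cell E X} {c : A} (f f' : c ⟶ i.1) (hf : E.minus f) (hf' : E.minus f')
    (he : X.map f.op i.2.1 = X.map f'.op i.2.1) : f = f' := by
  obtain ⟨e, h1, _⟩ := E.ez_unique X c f f' i.2.1 i.2.1 hf hf' i.2.2 i.2.2 he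
  have he2 : eqToHom e = 𝟙 i.1 := by
    have h3 : e = rfl := rfl
    rw [h3, eqToHom_refl]
  rw [h1, he2, Category.comp_id]

lemma core_self' (i : Cell E X) : core E X i.1 i.2.1 = i := by
  rw [core_self E X i.2.1 i.2.2]
  rfl

lemma sect_mem {i : Cell E X} {c : A} (f : c ⟶ i.1) :
    core E X c (X.map f.op i.2.1) ∈ Dle E X i := by
  rcases core_map E X f i.2.1 with h | h
  · exact Or.inr (h.trans (core_self' E X i))
  · rw [core_self' E X i] at h
    exact Or.inl (Or.inl h)

lemma succ_mem (hC : SaturatedByMono Cs) (hrep : ∀ a : A, yoneda.obj a ∈ Cs) (i : Cell E X)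
    (hlt : (SP E X (Dlt E X i) (dc_lt E X i)).toFunctor ∈ Cs)
    (hBC : (BD E X i).toFunctor ∈ Cs) :
    (SP E X (Dle E X i) (dc_le E X i)).toFunctor ∈ Cs := by
  classical
  let u : (BD E X i).toFunctor ⟶ (SP E X (Dlt E X i) (dc_lt E X i)).toFunctor :=
    { app := fun U => TypeCat.ofHom fun f => ⟨X.map f.1.op i.2.1, f.2⟩
      naturality := by
        intro U V g
        refine ConcreteCategory.hom_ext _ _ (fun f => ?_)
        apply Subtype.ext
        show X.map ((yoneda.obj i.1).map g f.1).op i.2.1 = X.map g (X.map f.1.op i.2.1)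
        rw [show ((yoneda.obj i.1).map g f.1) = g.unop ≫ f.1 from rfl]
        exact map_op_comp X g.unop f.1 i.2.1 }
  let w : yoneda.obj i.1 ⟶ (SP E X (Dle E X i) (dc_le E X i)).toFunctor :=
    { app := fun U => TypeCat.ofHom fun f => ⟨X.map f.op i.2.1, sect_mem E X f⟩
      naturality := by
        intro U V g
        refine ConcreteCategory.hom_ext _ _ (fun f => ?_)
        apply Subtype.ext
        show X.map ((yoneda.obj i.1).map g f).op i.2.1 = X.map g (X.map f.op i.2.1)
        rw [show ((yoneda.obj i.1).map g f) = g.unop ≫ f from rfl]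
        exact map_op_comp X g.unop f i.2.1 }
  let v : (SP E X (Dlt E X i) (dc_lt E X i)).toFunctor ⟶
      (SP E X (Dle E X i) (dc_le E X i)).toFunctor :=
    Subfunctor.homOfLe (SP_mono E X _ _ (fun k hk => Or.inl hk))
  have comm : u ≫ v = (BD E X i).ι ≫ w := by
    apply NatTrans.ext
    funext U
    refine ConcreteCategory.hom_ext _ _ (fun f => ?_)
    rfl
  -- extraction of a minus map representing a section whose core is `i`
  have hsec : ∀ (U : Aᵒᵖ) (z : X.obj U), core E X U.unop z ∈ Dle E X i →
      core E X U.unop z ∉ Dlt E X i →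
      ∃ f : U.unop ⟶ i.1, E.minus f ∧ X.map f.op i.2.1 = z := by
    intro U z hz h
    have hcore : core E X U.unop z = i := by
      rcases hz with h' | h'
      · exact absurd h' h
      · exact h'
    refine ⟨coreHom E X U.unop z ≫ eqToHom (congrArg Sigma.fst hcore),
      E.minus_comp _ _ (core_minus E X U.unop z) (minus_eqToHom E _), ?_⟩
    rw [map_op_comp, cell_cast E X hcore, core_eq]
  have cross : ∀ (s : PushoutCocone u (BD E X i).ι) (U : Aᵒᵖ) (f : U.unop ⟶ i.1)
      (hf : core E X U.unop (X.map f.op i.2.1) ∈ Dlt E X i),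
      s.inl.app U ⟨X.map f.op i.2.1, hf⟩ = s.inr.app U f := by
    intro s U f hf
    exact types_congr_hom (congrArg (fun (n : _ ⟶ s.pt) => n.app U) s.condition) ⟨f, hf⟩
  have inr_eq : ∀ (s : PushoutCocone u (BD E X i).ι) (U : Aᵒᵖ) (f f' : U.unop ⟶ i.1),
      X.map f.op i.2.1 = X.map f'.op i.2.1 →
      core E X U.unop (X.map f.op i.2.1) ∉ Dlt E X i →
      s.inr.app U f = s.inr.app U f' := by
    intro s U f f' he h
    have hf := not_mem_dlt E X f h
    rw [he] at h
    have hf' := not_mem_dlt E X f' h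
    rw [inj_minus E X f f' hf.1 hf'.1 he]
  let desc : ∀ s : PushoutCocone u (BD E X i).ι,
      (SP E X (Dle E X i) (dc_le E X i)).toFunctor ⟶ s.pt := fun s =>
    { app := fun U => TypeCat.ofHom fun z =>
        if h : core E X U.unop z.1 ∈ Dlt E X i then s.inl.app U ⟨z.1, h⟩
        else s.inr.app U (hsec U z.1 z.2 h).choose
      naturality := by
        intro U V g
        refine ConcreteCategory.hom_ext _ _ (fun z => ?_)
        show (if h : core E X V.unop (X.map g z.1) ∈ Dlt E X i
            then s.inl.app V ⟨X.map g z.1, h⟩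
            else s.inr.app V (hsec V (X.map g z.1) ((SP E X (Dle E X i) (dc_le E X i)).map g z.2) h).choose)
          = s.pt.map g (if h : core E X U.unop z.1 ∈ Dlt E X i then s.inl.app U ⟨z.1, h⟩
            else s.inr.app U (hsec U z.1 z.2 h).choose)
        by_cases hU : core E X U.unop z.1 ∈ Dlt E X i
        · have hV : core E X V.unop (X.map g z.1) ∈ Dlt E X i :=
            (SP E X (Dlt E X i) (dc_lt E X i)).map g hU
          rw [dif_pos hU, dif_pos hV]
          exact NatTrans.naturality_apply
            s.inl g ⟨z.1, hU⟩
        · rw [dif_neg hU]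
          obtain ⟨hm0, he0⟩ := (hsec U z.1 z.2 hU).choose_spec
          set f₀ := (hsec U z.1 z.2 hU).choose with hf₀
          have hval : X.map (g.unop ≫ f₀).op i.2.1 = X.map g z.1 := by
            rw [map_op_comp]
            exact congrArg (X.map g) he0
          have hrhs : s.pt.map g (s.inr.app U f₀) = s.inr.app V (g.unop ≫ f₀) :=
            (NatTrans.naturality_apply s.inr g f₀).symm
          rw [hrhs]
          by_cases hV : core E X V.unop (X.map g z.1) ∈ Dlt E X i
          · rw [dif_pos hV]
            have hv' : core E X V.unop (X.map (g.unop ≫ f₀).op i.2.1) ∈ Dlt E X i := by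
              rw [hval]; exact hV
            have h9 : (⟨X.map g z.1, hV⟩ :
                (SP E X (Dlt E X i) (dc_lt E X i)).toFunctor.obj V) =
                ⟨X.map (g.unop ≫ f₀).op i.2.1, hv'⟩ := Subtype.ext hval.symm
            rw [h9]
            exact cross s V (g.unop ≫ f₀) hv'
          · rw [dif_neg hV]
            obtain ⟨hm1, he1⟩ :=
              (hsec V (X.map g z.1) ((SP E X (Dle E X i) (dc_le E X i)).map g z.2) hV).choose_spec
            refine inr_eq s V _ (g.unop ≫ f₀) (he1.trans hval.symm) ?_
            rw [he1]
            exact hV }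
  have hcolim : IsColimit (PushoutCocone.mk v w comm) := by
    refine PushoutCocone.IsColimit.mk comm desc ?_ ?_ ?_
    · intro s
      apply NatTrans.ext
      funext U
      refine ConcreteCategory.hom_ext _ _ (fun z => ?_)
      show (if h : core E X U.unop z.1 ∈ Dlt E X i then s.inl.app U ⟨z.1, h⟩
        else s.inr.app U _) = s.inl.app U z
      have h2 : core E X U.unop z.1 ∈ Dlt E X i := z.2
      rw [dif_pos h2]
      rfl
    · intro s
      apply NatTrans.ext
      funext U
      refine ConcreteCategory.hom_ext _ _ (fun f => ?_)
      show (if h : core E X U.unop (X.map f.op i.2.1) ∈ Dlt E X i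
          then s.inl.app U ⟨X.map f.op i.2.1, h⟩
          else s.inr.app U (hsec U _ (sect_mem E X f) h).choose) = s.inr.app U f
      by_cases h : core E X U.unop (X.map f.op i.2.1) ∈ Dlt E X i
      · rw [dif_pos h]
        exact cross s U f h
      · rw [dif_neg h]
        obtain ⟨hm1, he1⟩ := (hsec U _ (sect_mem E X f) h).choose_spec
        refine inr_eq s U _ f he1 ?_
        rw [he1]
        exact h
    · intro s m hl hr
      apply NatTrans.ext
      funext U
      refine ConcreteCategory.hom_ext _ _ (fun z => ?_)
      show m.app U z = (if h : core E X U.unop z.1 ∈ Dlt E X i then s.inl.app U ⟨z.1, h⟩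
        else s.inr.app U (hsec U z.1 z.2 h).choose)
      by_cases h : core E X U.unop z.1 ∈ Dlt E X i
      · rw [dif_pos h]
        calc m.app U z = (v ≫ m).app U ⟨z.1, h⟩ := rfl
          _ = s.inl.app U ⟨z.1, h⟩ :=
            types_congr_hom (congrArg (fun (n : _ ⟶ s.pt) => n.app U) hl) ⟨z.1, h⟩
      · rw [dif_neg h]
        obtain ⟨hm1, he1⟩ := (hsec U z.1 z.2 h).choose_spec
        have h9 : w.app U ((hsec U z.1 z.2 h).choose) = z := Subtype.ext he1
        calc m.app U z = (w ≫ m).app U (hsec U z.1 z.2 h).choose :=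
            (congrArg (m.app U) h9).symm
          _ = s.inr.app U (hsec U z.1 z.2 h).choose :=
            types_congr_hom (congrArg (fun (n : _ ⟶ s.pt) => n.app U) hr) (hsec U z.1 z.2 h).choose
  have hpo : IsPushout u (BD E X i).ι v w := IsPushout.of_isColimit hcolim
  exact hC.pushout u (BD E X i).ι v w inferInstance hpo hBC hlt (hrep i.1)

lemma bd_nondeg (i : Cell E X) (c : A) (sb : (BD E X i).toFunctor.obj (op c))
    (hnd : E.toReedyStruct.Nondegenerate sb) : E.deg c < E.deg i.1 := by
  rcases sb with ⟨f, hf⟩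
  obtain ⟨e, m, p, hm, hp, hmp⟩ := E.fact f
  rcases lt_or_eq_of_le (E.minus_deg m hm) with hlt | heq
  · exfalso
    apply hnd
    have hpmem : core E X e (X.map p.op i.2.1) ∈ Dlt E X i := by
      have hcc : core E X e (X.map p.op i.2.1) = core E X c (X.map f.op i.2.1) := by
        rw [← hmp, map_op_comp, core_map_minus E X m hm]
      rw [hcc]
      exact hf
    refine ⟨e, m, hm, hlt, ⟨p, hpmem⟩, ?_⟩
    apply Subtype.ext
    exact hmp
  · obtain ⟨hce, hme⟩ := E.minus_deg_eq m hm heq.symm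
    subst hce
    rw [hme, eqToHom_refl, Category.id_comp] at hmp
    subst hmp
    rcases lt_or_eq_of_le (E.plus_deg _ hp) with h | h
    · exact h
    · exfalso
      obtain ⟨hca, hfe⟩ := E.plus_deg_eq _ hp h
      have hf2 : core E X c (X.map p.op i.2.1) ∈ Dlt E X i := hf
      rw [hfe, core_map_minus E X (eqToHom hca) (minus_eqToHom E hca),
        core_self' E X i] at hf2
      exact cellR_irrefl E X i hf2

lemma engine (hC : SaturatedByMono Cs) (hrep : ∀ a : A, yoneda.obj a ∈ Cs)
    (hB : ∀ i : Cell E X, (BD E X i).toFunctor ∈ Cs) : X ∈ Cs := by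
  have main : ∀ i : Cell E X, (SP E X (Dle E X i) (dc_le E X i)).toFunctor ∈ Cs := by
    intro i
    refine (cellR_wf E X).induction
      (C := fun j => (SP E X (Dle E X j) (dc_le E X j)).toFunctor ∈ Cs) i ?_
    intro j IH
    exact succ_mem E X hC hrep j
      (chain_mem E X hC _ (dc_lt E X j) (fun k hk => IH k hk)) (hB j)
  have hall := chain_mem E X hC Set.univ (dc_univ E X) (fun j _ => main j)
  have htop : SP E X Set.univ (dc_univ E X) = (⊤ : Subfunctor X) := by
    apply le_antisymm
    · intro U z _
      exact trivial
    · intro U z _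
      exact trivial
  rw [htop] at hall
  exact hC.retract (inv (Subfunctor.ι (⊤ : Subfunctor X))) (Subfunctor.ι ⊤)
    (by simp) hall

lemma bounded (hC : SaturatedByMono Cs) (hrep : ∀ a : A, yoneda.obj a ∈ Cs) :
    ∀ (n : ℕ) (Y : Psh A),
      (∀ (c : A) (z : Y.obj (op c)), E.toReedyStruct.Nondegenerate z → E.deg c < n) →
      Y ∈ Cs := by
  intro n
  induction n using Nat.strong_induction_on with
  | _ n IH =>
    intro Y hY
    refine engine E Y hC hrep ?_
    intro i
    exact IH (E.deg i.1) (hY i.1 i.2.1 i.2.2) (BD E Y i).toFunctor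
      (fun c sb hnd => bd_nondeg E Y i c sb hnd)

end Aux13

/-- Proposition: over an elegant Reedy category, any class of presheaves saturated by
monomorphisms and containing the representables contains all presheaves. -/
theorem stmt13 (E : ElegantReedy A) (C : Set (Psh A)) (hC : SaturatedByMono C)
    (hrep : ∀ a : A, yoneda.obj a ∈ C) : ∀ X : Psh A, X ∈ C := by
  intro X
  exact Aux13.engine E X hC hrep (fun i => Aux13.bounded E hC hrep (E.deg i.1)
    (Aux13.BD E X i).toFunctor (fun c sb hnd => Aux13.bd_nondeg E X i c sb hnd))
end
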